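/- arXiv:2310.08357 — 4 statements merged into one kernel-verified Lean document; each statement's English description precedes it below -/
import Mathlib

section
/- With Q ⋆ Q' the join of homogeneous affine monoids Q and Q', the Hilbert series of the normalizations satisfy Hilb(over(Q ⋆ Q'), t) = Hilb(Q̄, t) · Hilb(Q̄', t). -/
open scoped Classical

noncomputable section

namespace MonoidHilbert

/-- The saturation (normalization) of an additive submonoid of `σ → ℤ`:
`Q̄ = ℤQ ∩ ℝ_{≥0}Q`, described as the set of elements of the group generated by `Q`
some positive multiple of which lies in `Q`. -/
def saturation {σ : Type*} (Q : AddSubmonoid (σ → ℤ)) : AddSubmonoid (σ → ℤ) where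
  carrier := {x | x ∈ AddSubgroup.closure (Q : Set (σ → ℤ)) ∧ ∃ n : ℕ, 0 < n ∧ n • x ∈ Q}
  zero_mem' := ⟨AddSubgroup.zero_mem _, 1, one_pos, by simpa using Q.zero_mem⟩
  add_mem' := by
    rintro x y ⟨hx, n, hn, hnx⟩ ⟨hy, m, hm, hmy⟩
    refine ⟨AddSubgroup.add_mem _ hx hy, n * m, Nat.mul_pos hn hm, ?_⟩
    have h1 : (n * m) • (x + y) = m • (n • x) + n • (m • y) := by
      rw [smul_add]
      congr 1
      · rw [mul_comm, mul_smul]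
      · rw [mul_smul]
    rw [h1]
    exact Q.add_mem (AddSubmonoid.nsmul_mem Q hnx m) (AddSubmonoid.nsmul_mem Q hmy n)

/-- The number of degree-`n` elements of `S`, i.e. `dim_k k[S]_n`. -/
def hilbCoeff {σ : Type*} (S : Set (σ → ℤ)) (deg : (σ → ℤ) →+ ℤ) (n : ℕ) : ℕ :=
  Nat.card {x : σ → ℤ // x ∈ S ∧ deg x = n}

/-- The Hilbert series of (the monoid algebra on) `S` with respect to the grading `deg`. -/
def hilbSeries {σ : Type*} (S : Set (σ → ℤ)) (deg : (σ → ℤ) →+ ℤ) : PowerSeries ℤ :=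
  PowerSeries.mk fun n => (hilbCoeff S deg n : ℤ)

/-- The Krull dimension of the monoid algebra `k[Q]`, i.e. the rank of the group `ℤQ`. -/
def monoidDim {σ : Type*} (Q : AddSubmonoid (σ → ℤ)) : ℕ :=
  Module.finrank ℤ (Submodule.span ℤ (Q : Set (σ → ℤ)))

/-- `h` is the h-polynomial: `Hilb = h(t)/(1-t)^D`. -/
def IsHPoly {σ : Type*} (S : Set (σ → ℤ)) (deg : (σ → ℤ) →+ ℤ) (D : ℕ)
    (h : Polynomial ℤ) : Prop :=
  (h : PowerSeries ℤ) = hilbSeries S deg * (1 - PowerSeries.X) ^ D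

/-- A homogeneous affine monoid in `ℤ^d`: a finitely generated submonoid all of whose
generators lie on the hyperplane `deg = 1` for a linear functional `deg`. -/
structure HomAffineMonoid (d : ℕ) where
  gens : Finset (Fin d → ℤ)
  deg : (Fin d → ℤ) →+ ℤ
  deg_one : ∀ s ∈ gens, deg s = 1

/-- The underlying affine monoid. -/
def HomAffineMonoid.Q {d : ℕ} (M : HomAffineMonoid d) : AddSubmonoid (Fin d → ℤ) :=
  AddSubmonoid.closure M.gens

end MonoidHilbert

namespace MonoidHilbert

/-- Embedding `α ↦ (α, 0_{d'}, 0)` of `ℤ^d` into `ℤ^{d+d'+1}`. -/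
def joinL {d d' : ℕ} (α : Fin d → ℤ) : Fin (d + d' + 1) → ℤ :=
  fun i => if h : (i : ℕ) < d then α ⟨i, h⟩ else 0

/-- Embedding `α' ↦ (0_d, α', 1)` of `ℤ^{d'}` into `ℤ^{d+d'+1}`. -/
def joinR {d d' : ℕ} (α : Fin d' → ℤ) : Fin (d + d' + 1) → ℤ :=
  fun i => if h0 : (i : ℕ) < d then 0
    else if h : (i : ℕ) < d + d' then α ⟨(i : ℕ) - d, by omega⟩ else 1

/-- Projection onto the first `d` coordinates, as an additive homomorphism. -/
def projHom (d d' : ℕ) : (Fin (d + d' + 1) → ℤ) →+ (Fin d → ℤ) :=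
  AddMonoidHom.mk' (fun x i => x (Fin.castLE (by omega) i)) (fun a b => rfl)

/-- The join `Q ⋆ Q'` of two homogeneous affine monoids, generated by `(α_i, 0, 0)` and
`(0, α'_j, 1)` for the generators `α_i` of `Q` and `α'_j` of `Q'`. -/
def HomAffineMonoid.join {d d' : ℕ} (M : HomAffineMonoid d) (M' : HomAffineMonoid d') :
    HomAffineMonoid (d + d' + 1) where
  gens := M.gens.image joinL ∪ M'.gens.image joinR
  deg := M.deg.comp (projHom d d') +
    Pi.evalAddMonoidHom (fun _ : Fin (d + d' + 1) => ℤ) ⟨d + d', by omega⟩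
  deg_one := by
    intro s hs
    simp only [Finset.mem_union, Finset.mem_image] at hs
    rcases hs with ⟨a, ha, rfl⟩ | ⟨a, ha, rfl⟩
    · have h1 : (projHom d d') (joinL a) = a := by
        funext i
        simp [projHom, joinL, i.isLt]
      have h2 : joinL (d' := d') a ⟨d + d', by omega⟩ = 0 := by
        simp [joinL]
      simp [h1, h2, M.deg_one a ha]
    · have h1 : (projHom d d') (joinR a) = 0 := by
        funext i
        simp [projHom, joinR, i.isLt]
      have h2 : joinR (d := d) a ⟨d + d', by omega⟩ = 1 := by
        simp [joinR]
      simp [h1, h2]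

end MonoidHilbert

namespace MonoidHilbert

def pMHom (d d' : ℕ) : (Fin (d + d' + 1) → ℤ) →+ (Fin d' → ℤ) :=
  AddMonoidHom.mk' (fun x i => x ⟨d + (i : ℕ), by omega⟩) (fun a b => rfl)

def eLHom (d d' : ℕ) : (Fin d → ℤ) →+ (Fin (d + d' + 1) → ℤ) :=
  AddMonoidHom.mk' joinL (by
    intro a b; funext i; simp only [joinL, Pi.add_apply]; split <;> simp)

def eRHom (d d' : ℕ) (deg' : (Fin d' → ℤ) →+ ℤ) :
    (Fin d' → ℤ) →+ (Fin (d + d' + 1) → ℤ) :=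
  AddMonoidHom.mk' (fun y i => if _ : (i : ℕ) < d then 0
      else if h : (i : ℕ) < d + d' then y ⟨(i : ℕ) - d, by omega⟩ else deg' y)
    (by intro a b; funext i; simp only [Pi.add_apply]; split_ifs <;> simp)

variable {d d' : ℕ} {deg' : (Fin d' → ℤ) →+ ℤ}

@[simp] lemma pL_eL (y : Fin d → ℤ) : projHom d d' (eLHom d d' y) = y := by
  funext i; simp [projHom, eLHom, joinL, AddMonoidHom.mk'_apply, i.isLt]

@[simp] lemma pM_eL (y : Fin d → ℤ) : pMHom d d' (eLHom d d' y) = 0 := by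
  funext i; simp only [pMHom, eLHom, joinL, AddMonoidHom.mk'_apply, Pi.zero_apply]
  rw [dif_neg (by omega)]

@[simp] lemma pL_eR (y : Fin d' → ℤ) : projHom d d' (eRHom d d' deg' y) = 0 := by
  funext i; simp only [projHom, eRHom, AddMonoidHom.mk'_apply, Pi.zero_apply]
  rw [dif_pos]; simpa using i.isLt

@[simp] lemma pM_eR (y : Fin d' → ℤ) : pMHom d d' (eRHom d d' deg' y) = y := by
  funext i
  simp only [pMHom, eRHom, AddMonoidHom.mk'_apply]
  rw [dif_neg (by omega), dif_pos (by omega)]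
  congr 1; ext; simp

@[simp] lemma last_eL (y : Fin d → ℤ) : eLHom d d' y ⟨d + d', by omega⟩ = 0 := by
  simp only [eLHom, joinL, AddMonoidHom.mk'_apply]
  rw [dif_neg (by omega)]

@[simp] lemma last_eR (y : Fin d' → ℤ) :
    eRHom d d' deg' y ⟨d + d', by omega⟩ = deg' y := by
  simp only [eRHom, AddMonoidHom.mk'_apply]
  rw [dif_neg (by omega), dif_neg (by omega)]

lemma eL_eq_joinL (y : Fin d → ℤ) : eLHom d d' y = joinL y := rfl

lemma eR_eq_joinR (y : Fin d' → ℤ) (hy : deg' y = 1) :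
    eRHom d d' deg' y = joinR y := by
  funext i; simp only [eRHom, joinR, AddMonoidHom.mk'_apply, hy]

variable (M : HomAffineMonoid d) (M' : HomAffineMonoid d')

lemma mem_join_iff (x : Fin (d + d' + 1) → ℤ) :
    x ∈ (M.join M').Q ↔
      ∃ q ∈ M.Q, ∃ q' ∈ M'.Q, x = eLHom d d' q + eRHom d d' M'.deg q' := by
  constructor
  · intro hx
    induction hx using AddSubmonoid.closure_induction with
    | mem s hs =>
        simp only [HomAffineMonoid.join, Finset.coe_union, Set.mem_union, Finset.coe_image,
          Set.mem_image, Finset.mem_coe] at hs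
        rcases hs with ⟨a, ha, rfl⟩ | ⟨a, ha, rfl⟩
        · exact ⟨a, AddSubmonoid.subset_closure ha, 0, AddSubmonoid.zero_mem _, by
            simp [eL_eq_joinL]⟩
        · exact ⟨0, AddSubmonoid.zero_mem _, a, AddSubmonoid.subset_closure ha, by
            rw [eR_eq_joinR a (M'.deg_one a ha)]; simp⟩
    | zero => exact ⟨0, AddSubmonoid.zero_mem _, 0, AddSubmonoid.zero_mem _, by simp⟩
    | add a b _ _ iha ihb =>
        obtain ⟨q, hq, q', hq', rfl⟩ := iha
        obtain ⟨r, hr, r', hr', rfl⟩ := ihb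
        exact ⟨q + r, AddSubmonoid.add_mem _ hq hr, q' + r',
          AddSubmonoid.add_mem _ hq' hr', by simp only [map_add]; abel⟩
  · rintro ⟨q, hq, q', hq', rfl⟩
    have h1 : eLHom d d' q ∈ (M.join M').Q := by
      have : eLHom d d' q ∈ AddSubmonoid.map (eLHom d d') (AddSubmonoid.closure M.gens) :=
        ⟨q, hq, rfl⟩
      rw [AddMonoidHom.map_mclosure] at this
      refine AddSubmonoid.closure_mono ?_ this
      rintro _ ⟨a, ha, rfl⟩
      simp only [HomAffineMonoid.join, Finset.coe_union, Set.mem_union, Finset.coe_image,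
        Set.mem_image, Finset.mem_coe]
      exact Or.inl ⟨a, ha, rfl⟩
    have h2 : eRHom d d' M'.deg q' ∈ (M.join M').Q := by
      have : eRHom d d' M'.deg q' ∈
          AddSubmonoid.map (eRHom d d' M'.deg) (AddSubmonoid.closure M'.gens) := ⟨q', hq', rfl⟩
      rw [AddMonoidHom.map_mclosure] at this
      refine AddSubmonoid.closure_mono ?_ this
      rintro _ ⟨a, ha, rfl⟩
      simp only [HomAffineMonoid.join, Finset.coe_union, Set.mem_union, Finset.coe_image,
        Set.mem_image, Finset.mem_coe]
      exact Or.inr ⟨a, ha, (eR_eq_joinR a (M'.deg_one a ha)).symm⟩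
    exact AddSubmonoid.add_mem _ h1 h2

lemma mem_zjoin_iff (x : Fin (d + d' + 1) → ℤ) :
    x ∈ AddSubgroup.closure ((M.join M').Q : Set (Fin (d + d' + 1) → ℤ)) ↔
      projHom d d' x ∈ AddSubgroup.closure (M.Q : Set (Fin d → ℤ)) ∧
      pMHom d d' x ∈ AddSubgroup.closure (M'.Q : Set (Fin d' → ℤ)) ∧
      x = eLHom d d' (projHom d d' x) + eRHom d d' M'.deg (pMHom d d' x) := by
  constructor
  · intro hx
    induction hx using AddSubgroup.closure_induction with
    | mem s hs =>
        obtain ⟨q, hq, q', hq', rfl⟩ := (mem_join_iff M M' s).mp hs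
        refine ⟨?_, ?_, ?_⟩ <;> simp only [map_add, pL_eL, pL_eR, pM_eL, pM_eR, add_zero,
          zero_add]
        · exact AddSubgroup.subset_closure hq
        · exact AddSubgroup.subset_closure hq'
    | zero =>
        refine ⟨by simpa using AddSubgroup.zero_mem _, by simpa using AddSubgroup.zero_mem _, ?_⟩
        simp
    | add a b _ _ iha ihb =>
        obtain ⟨h1, h2, h3⟩ := iha
        obtain ⟨h4, h5, h6⟩ := ihb
        refine ⟨?_, ?_, ?_⟩ <;> simp only [map_add]
        · exact AddSubgroup.add_mem _ h1 h4
        · exact AddSubgroup.add_mem _ h2 h5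
        · conv_lhs => rw [h3, h6]
          abel
    | neg a _ iha =>
        obtain ⟨h1, h2, h3⟩ := iha
        refine ⟨?_, ?_, ?_⟩ <;> simp only [map_neg]
        · exact AddSubgroup.neg_mem _ h1
        · exact AddSubgroup.neg_mem _ h2
        · conv_lhs => rw [h3]
          rw [neg_add]
  · rintro ⟨h1, h2, h3⟩
    rw [h3]
    have e1 : eLHom d d' (projHom d d' x) ∈
        AddSubgroup.closure ((M.join M').Q : Set (Fin (d + d' + 1) → ℤ)) := by
      have : eLHom d d' (projHom d d' x) ∈
          AddSubgroup.map (eLHom d d') (AddSubgroup.closure (M.Q : Set (Fin d → ℤ))) :=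
        ⟨_, h1, rfl⟩
      rw [AddMonoidHom.map_closure] at this
      refine AddSubgroup.closure_mono ?_ this
      rintro _ ⟨a, ha, rfl⟩
      exact SetLike.mem_coe.mpr ((mem_join_iff M M' _).mpr
        ⟨a, ha, 0, AddSubmonoid.zero_mem _, by simp⟩)
    have e2 : eRHom d d' M'.deg (pMHom d d' x) ∈
        AddSubgroup.closure ((M.join M').Q : Set (Fin (d + d' + 1) → ℤ)) := by
      have : eRHom d d' M'.deg (pMHom d d' x) ∈
          AddSubgroup.map (eRHom d d' M'.deg)
            (AddSubgroup.closure (M'.Q : Set (Fin d' → ℤ))) := ⟨_, h2, rfl⟩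
      rw [AddMonoidHom.map_closure] at this
      refine AddSubgroup.closure_mono ?_ this
      rintro _ ⟨a, ha, rfl⟩
      exact SetLike.mem_coe.mpr ((mem_join_iff M M' _).mpr
        ⟨0, AddSubmonoid.zero_mem _, a, ha, by simp⟩)
    exact AddSubgroup.add_mem _ e1 e2


lemma mem_sat_join_iff (x : Fin (d + d' + 1) → ℤ) :
    x ∈ saturation (M.join M').Q ↔
      projHom d d' x ∈ saturation M.Q ∧ pMHom d d' x ∈ saturation M'.Q ∧
      x = eLHom d d' (projHom d d' x) + eRHom d d' M'.deg (pMHom d d' x) := by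
  constructor
  · rintro ⟨hz, n, hn, hnx⟩
    obtain ⟨h1, h2, h3⟩ := (mem_zjoin_iff M M' x).mp hz
    obtain ⟨q, hq, q', hq', hrep⟩ := (mem_join_iff M M' _).mp hnx
    have hq1 : n • projHom d d' x = q := by
      have := congrArg (projHom d d') hrep
      rw [map_nsmul, map_add, pL_eL, pL_eR, add_zero] at this; exact this
    have hq2 : n • pMHom d d' x = q' := by
      have := congrArg (pMHom d d') hrep
      rw [map_nsmul, map_add, pM_eL, pM_eR, zero_add] at this; exact this
    exact ⟨⟨h1, n, hn, hq1 ▸ hq⟩, ⟨h2, n, hn, hq2 ▸ hq'⟩, h3⟩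
  · rintro ⟨⟨hy, n, hn, hny⟩, ⟨hy', m, hm, hmy⟩, hrec⟩
    refine ⟨(mem_zjoin_iff M M' x).mpr ⟨hy, hy', hrec⟩, n * m, Nat.mul_pos hn hm, ?_⟩
    refine (mem_join_iff M M' _).mpr ⟨(n * m) • projHom d d' x, ?_, (n * m) • pMHom d d' x, ?_, ?_⟩
    · rw [mul_comm, mul_smul]
      exact AddSubmonoid.nsmul_mem _ hny m
    · rw [mul_smul]
      exact AddSubmonoid.nsmul_mem _ hmy n
    · conv_lhs => rw [hrec]
      rw [smul_add, map_nsmul, map_nsmul]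

lemma deg_join_eq (x : Fin (d + d' + 1) → ℤ)
    (hrec : x = eLHom d d' (projHom d d' x) + eRHom d d' M'.deg (pMHom d d' x)) :
    (M.join M').deg x = M.deg (projHom d d' x) + M'.deg (pMHom d d' x) := by
  have hlast : x ⟨d + d', by omega⟩ = M'.deg (pMHom d d' x) := by
    conv_lhs => rw [hrec]
    simp [Pi.add_apply]
  simp only [HomAffineMonoid.join, AddMonoidHom.add_apply, AddMonoidHom.coe_comp,
    Function.comp_apply, Pi.evalAddMonoidHom_apply]
  rw [hlast]

lemma deg_nonneg_of_mem_Q {k : ℕ} (N : HomAffineMonoid k) {q : Fin k → ℤ} (hq : q ∈ N.Q) :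
    0 ≤ N.deg q := by
  induction hq using AddSubmonoid.closure_induction with
  | mem s hs => rw [N.deg_one s hs]; norm_num
  | zero => simp
  | add a b _ _ iha ihb => rw [map_add]; omega

lemma deg_nonneg_of_mem_sat {k : ℕ} (N : HomAffineMonoid k) {x : Fin k → ℤ}
    (hx : x ∈ saturation N.Q) : 0 ≤ N.deg x := by
  obtain ⟨-, n, hn, hnx⟩ := hx
  have := deg_nonneg_of_mem_Q N hnx
  rw [map_nsmul, nsmul_eq_mul] at this
  have hn' : (0:ℤ) < n := by exact_mod_cast hn
  nlinarith

lemma deg_sum_multiset {k : ℕ} (N : HomAffineMonoid k) (l : Multiset (Fin k → ℤ))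
    (hl : ∀ g ∈ l, g ∈ N.gens) : N.deg l.sum = l.card := by
  induction l using Multiset.induction_on with
  | empty => simp
  | cons a t ih =>
      rw [Multiset.sum_cons, map_add, N.deg_one a (hl a (Multiset.mem_cons_self a t)),
        ih (fun g hg => hl g (Multiset.mem_cons_of_mem hg)), Multiset.card_cons]
      push_cast
      ring

lemma abs_sum_multiset_le {k : ℕ} (l : Multiset (Fin k → ℤ)) (B : ℤ)
    (hB : ∀ g ∈ l, ∀ j, |g j| ≤ B) (j : Fin k) : |l.sum j| ≤ l.card * B := by
  induction l using Multiset.induction_on with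
  | empty => simp
  | cons a t ih =>
      rw [Multiset.sum_cons, Multiset.card_cons]
      have h1 : |(a + t.sum) j| ≤ |a j| + |t.sum j| := abs_add_le _ _
      have h2 := ih (fun g hg j => hB g (Multiset.mem_cons_of_mem hg) j)
      have h3 := hB a (Multiset.mem_cons_self a t) j
      push_cast
      calc |(a + t.sum) j| ≤ |a j| + |t.sum j| := h1
        _ ≤ B + t.card * B := by exact add_le_add h3 h2
        _ = (t.card + 1) * B := by ring

lemma slice_finite {k : ℕ} (N : HomAffineMonoid k) (n : ℤ) :
    {x : Fin k → ℤ | x ∈ saturation N.Q ∧ N.deg x = n}.Finite := by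
  classical
  set B : ℤ := ((N.gens.sup fun g => Finset.univ.sup fun j : Fin k => (g j).natAbs : ℕ) : ℤ) with hB
  have hBg : ∀ g ∈ N.gens, ∀ j : Fin k, |g j| ≤ B := by
    intro g hg j
    rw [hB, Int.abs_eq_natAbs]
    exact_mod_cast le_trans (Finset.le_sup (f := fun j : Fin k => (g j).natAbs)
      (Finset.mem_univ j)) (Finset.le_sup (f := fun g => Finset.univ.sup
        fun j : Fin k => (g j).natAbs) hg)
  have hsub : {x : Fin k → ℤ | x ∈ saturation N.Q ∧ N.deg x = n} ⊆
      Set.pi Set.univ (fun _ : Fin k => Set.Icc (-(|n| * B)) (|n| * B)) := by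
    rintro x ⟨⟨-, m, hm, hmx⟩, hdeg⟩
    intro j _
    obtain ⟨l, hl, hls⟩ := AddSubmonoid.exists_multiset_of_mem_closure hmx
    have hcard : (l.card : ℤ) = m * n := by
      have := deg_sum_multiset N l hl
      rw [hls, map_nsmul, nsmul_eq_mul, hdeg] at this
      linarith
    have habs : |(m • x) j| ≤ (m : ℤ) * n * B := by
      rw [← hls]
      calc |l.sum j| ≤ l.card * B := abs_sum_multiset_le l B (fun g hg => hBg g (hl g hg)) j
        _ = (m : ℤ) * n * B := by rw [hcard]
    have hm' : (0:ℤ) < m := by exact_mod_cast hm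
    have hBnn : 0 ≤ B := by positivity
    have hn : 0 ≤ n := by
      have h0 : (l.card : ℤ) ≥ 0 := by positivity
      nlinarith
    have hxj : |x j| ≤ |n| * B := by
      have hsm : (m • x) j = (m : ℤ) * x j := by
        simp [Pi.smul_apply, nsmul_eq_mul]
      rw [hsm, abs_mul, abs_of_pos hm'] at habs
      rw [abs_of_nonneg hn]
      nlinarith [abs_nonneg (x j)]
    exact Set.mem_Icc.mpr ⟨by linarith [abs_le.mp hxj], (abs_le.mp hxj).2⟩
  exact Set.Finite.subset (Set.Finite.pi (fun _ => Set.finite_Icc _ _)) hsub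


lemma hilbCoeff_eq_card {σ : Type*} (S : Set (σ → ℤ)) (deg : (σ → ℤ) →+ ℤ) (n : ℕ)
    (hf : {x : σ → ℤ | x ∈ S ∧ deg x = (n : ℤ)}.Finite) :
    hilbCoeff S deg n = hf.toFinset.card := by
  rw [hilbCoeff, ← Nat.card_eq_card_finite_toFinset hf]
  rfl

def sliceFinset {k : ℕ} (N : HomAffineMonoid k) (n : ℕ) : Finset (Fin k → ℤ) :=
  (slice_finite N (n : ℤ)).toFinset

lemma mem_sliceFinset {k : ℕ} (N : HomAffineMonoid k) (n : ℕ) (x : Fin k → ℤ) :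
    x ∈ sliceFinset N n ↔ x ∈ saturation N.Q ∧ N.deg x = (n : ℤ) := by
  simp [sliceFinset, Set.Finite.mem_toFinset]

lemma hilbCoeff_sat_eq {k : ℕ} (N : HomAffineMonoid k) (n : ℕ) :
    hilbCoeff (saturation N.Q : Set (Fin k → ℤ)) N.deg n = (sliceFinset N n).card :=
  hilbCoeff_eq_card _ _ _ (slice_finite N (n : ℤ))

lemma hilbCoeff_join (n : ℕ) :
    hilbCoeff (saturation (M.join M').Q : Set (Fin (d + d' + 1) → ℤ)) (M.join M').deg n =
      ∑ p ∈ Finset.HasAntidiagonal.antidiagonal n,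
        hilbCoeff (saturation M.Q : Set (Fin d → ℤ)) M.deg p.1 *
        hilbCoeff (saturation M'.Q : Set (Fin d' → ℤ)) M'.deg p.2 := by
  classical
  have e : {x : Fin (d + d' + 1) → ℤ //
        x ∈ (saturation (M.join M').Q : Set (Fin (d + d' + 1) → ℤ)) ∧
        (M.join M').deg x = (n : ℤ)} ≃
      {p : (Fin d → ℤ) × (Fin d' → ℤ) // p.1 ∈ saturation M.Q ∧ p.2 ∈ saturation M'.Q ∧
        M.deg p.1 + M'.deg p.2 = (n : ℤ)} := by
    refine ⟨fun x => ⟨(projHom d d' x.1, pMHom d d' x.1), ?_⟩,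
      fun p => ⟨eLHom d d' p.1.1 + eRHom d d' M'.deg p.1.2, ?_⟩, ?_, ?_⟩
    · obtain ⟨hx, hdeg⟩ := x.2
      obtain ⟨h1, h2, h3⟩ := (mem_sat_join_iff M M' x.1).mp hx
      exact ⟨h1, h2, by rw [← deg_join_eq M M' x.1 h3, hdeg]⟩
    · obtain ⟨h1, h2, h3⟩ := p.2
      have hrec : eLHom d d' p.1.1 + eRHom d d' M'.deg p.1.2 =
          eLHom d d' (projHom d d' (eLHom d d' p.1.1 + eRHom d d' M'.deg p.1.2)) +
          eRHom d d' M'.deg (pMHom d d' (eLHom d d' p.1.1 + eRHom d d' M'.deg p.1.2)) := by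
        simp
      refine ⟨(mem_sat_join_iff M M' _).mpr ⟨?_, ?_, hrec⟩, ?_⟩
      · simpa using h1
      · simpa using h2
      · rw [deg_join_eq M M' _ hrec]
        simpa using h3
    · rintro ⟨x, hx, hdeg⟩
      obtain ⟨h1, h2, h3⟩ := (mem_sat_join_iff M M' x).mp hx
      exact Subtype.ext h3.symm
    · rintro ⟨⟨y, y'⟩, h⟩
      apply Subtype.ext
      apply Prod.ext <;> simp
  rw [hilbCoeff, Nat.card_congr e]
  have hmem : ∀ p : (Fin d → ℤ) × (Fin d' → ℤ),
      (p.1 ∈ saturation M.Q ∧ p.2 ∈ saturation M'.Q ∧ M.deg p.1 + M'.deg p.2 = (n : ℤ)) ↔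
      p ∈ (Finset.HasAntidiagonal.antidiagonal n).biUnion
        (fun q => sliceFinset M q.1 ×ˢ sliceFinset M' q.2) := by
    intro p
    rw [Finset.mem_biUnion]
    constructor
    · rintro ⟨h1, h2, h3⟩
      have hn1 := deg_nonneg_of_mem_sat M h1
      have hn2 := deg_nonneg_of_mem_sat M' h2
      refine ⟨((M.deg p.1).toNat, (M'.deg p.2).toNat), ?_, ?_⟩
      · rw [Finset.HasAntidiagonal.mem_antidiagonal]; omega
      · rw [Finset.mem_product, mem_sliceFinset, mem_sliceFinset]
        exact ⟨⟨h1, by omega⟩, h2, by omega⟩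
    · rintro ⟨q, hq, hpq⟩
      rw [Finset.mem_product, mem_sliceFinset, mem_sliceFinset] at hpq
      rw [Finset.HasAntidiagonal.mem_antidiagonal] at hq
      exact ⟨hpq.1.1, hpq.2.1, by rw [hpq.1.2, hpq.2.2]; exact_mod_cast congrArg Nat.cast hq⟩
  rw [Nat.card_congr (Equiv.subtypeEquivRight hmem), Nat.card_eq_finsetCard,
    Finset.card_biUnion]
  · refine Finset.sum_congr rfl fun q _ => ?_
    rw [Finset.card_product, hilbCoeff_sat_eq, hilbCoeff_sat_eq]
  · rintro q hq r hr hqr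
    rw [Function.onFun, Finset.disjoint_left]
    rintro p hp1 hp2
    rw [Finset.mem_product, mem_sliceFinset, mem_sliceFinset] at hp1 hp2
    apply hqr
    rw [Finset.mem_coe, Finset.HasAntidiagonal.mem_antidiagonal] at hq hr
    have h1 : (q.1 : ℤ) = r.1 := by rw [← hp1.1.2, hp2.1.2]
    have : q.1 = r.1 := by exact_mod_cast h1
    have : q.2 = r.2 := by omega
    exact Prod.ext ‹q.1 = r.1› this

/-- **Theorem.** The Hilbert series of the normalization of the join `Q ⋆ Q'` is the product
of the Hilbert series of the normalizations of `Q` and of `Q'`. -/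
theorem hilbSeries_saturation_join {d d' : ℕ} (M : HomAffineMonoid d)
    (M' : HomAffineMonoid d') :
    hilbSeries (saturation (M.join M').Q : Set (Fin (d + d' + 1) → ℤ)) (M.join M').deg =
      hilbSeries (saturation M.Q : Set (Fin d → ℤ)) M.deg *
        hilbSeries (saturation M'.Q : Set (Fin d' → ℤ)) M'.deg := by
  ext n
  rw [hilbSeries, hilbSeries, hilbSeries, PowerSeries.coeff_mk, PowerSeries.coeff_mul,
    hilbCoeff_join]
  push_cast
  refine Finset.sum_congr rfl fun p _ => ?_
  rw [PowerSeries.coeff_mk, PowerSeries.coeff_mk]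

end MonoidHilbert
end
end

section
/- Let P be the 3-dimensional lattice simplex with vertices (0,0,0), (1,1,0), (0,1,1), (1,0,1). Then the toric ring k[Q_P] is a polynomial ring in 4 variables (in particular k[Q_P] is normal as a ring, i.e., its own normalization), but the Ehrhart ring of P is isomorphic to k[X_1,X_2,X_3,X_4,Y]/(X_1X_2X_3X_4 − Y²), which strictly contains k[Q_P]. Hence the Ehrhart ring of a lattice polytope need not coincide with the normalization of its toric ring. -/
open scoped Classical

noncomputable section

open scoped Pointwise

namespace MonoidHilbert

variable {V : Type*}

/-- The vector `e_u + e_v ∈ ℤ^V` associated to an edge `{u,v}`. -/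
def edgeVec (u v : V) : V → ℤ :=
  fun w => (if w = u then 1 else 0) + (if w = v then 1 else 0)

/-- The edge monoid `Q_G ⊂ ℤ^{V(G)}` of a graph `G`, generated by the vectors
`e_u + e_v` over all edges `{u,v}` of `G`. -/
def edgeMonoid (G : SimpleGraph V) : AddSubmonoid (V → ℤ) :=
  AddSubmonoid.closure {x | ∃ u v, G.Adj u v ∧ x = edgeVec u v}

/-- The Hilbert series of a subset `S ⊆ ℤ^V` in the standard grading of edge rings,
where an element of coordinate-sum `2n` has degree `n`. -/
def edgeHilbSeries [Fintype V] (S : Set (V → ℤ)) : PowerSeries ℤ :=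
  PowerSeries.mk fun n => (Nat.card {x : V → ℤ // x ∈ S ∧ ∑ i, x i = 2 * n} : ℤ)

/-- `h` is the h-polynomial of the edge-graded algebra on `S` with denominator `(1-t)^D`. -/
def IsEdgeHPoly [Fintype V] (S : Set (V → ℤ)) (D : ℕ) (h : Polynomial ℤ) : Prop :=
  (h : PowerSeries ℤ) = edgeHilbSeries S * (1 - PowerSeries.X) ^ D

/-- The real point associated to a lattice point. -/
def realify (x : V → ℤ) : V → ℝ := fun i => (x i : ℝ)

/-- A point of `ℝ^V` is a lattice point if all its coordinates are integers. -/
def IsLatticePoint (x : V → ℝ) : Prop := ∃ z : V → ℤ, x = realify z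

/-- The edge polytope `P_G`: the convex hull of the vectors `e_u + e_v` over edges of `G`. -/
def edgePolytope (G : SimpleGraph V) : Set (V → ℝ) :=
  convexHull ℝ {x | ∃ u v, G.Adj u v ∧ x = realify (edgeVec u v)}

/-- The codegree of a polytope `P ⊆ ℝ^V`:
the least `ℓ > 0` such that `ℓP` has a lattice point in its relative interior. -/
def codeg [Fintype V] (P : Set (V → ℝ)) : ℕ :=
  sInf {ℓ : ℕ | 0 < ℓ ∧ ∃ x ∈ intrinsicInterior ℝ ((ℓ : ℝ) • P), IsLatticePoint x}

end MonoidHilbert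

namespace MonoidHilbert

/-- The lattice points of the simplex `P = conv{(0,0,0),(1,1,0),(0,1,1),(1,0,1)}`. -/
def simplexVerts : Set (Fin 3 → ℤ) := {![0,0,0], ![1,1,0], ![0,1,1], ![1,0,1]}

/-- The simplex `P = conv{(0,0,0),(1,1,0),(0,1,1),(1,0,1)} ⊂ ℝ³`. -/
def simplexP : Set (Fin 3 → ℝ) := convexHull ℝ (realify '' simplexVerts)

/-- The monoid `Q_P ⊂ ℤ⁴` generated by `(α,1)` for `α` a lattice point of `P`. -/
def simplexQ : AddSubmonoid (Fin 4 → ℤ) :=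
  AddSubmonoid.closure {![0,0,0,1], ![1,1,0,1], ![0,1,1,1], ![1,0,1,1]}

/-- Forgetting the last coordinate. -/
def proj3 (x : Fin 4 → ℤ) : Fin 3 → ℤ := fun i => x i.castSucc

/-- The Ehrhart monoid of `P`: all `(α,n)` with `n ≥ 0` and `α ∈ nP ∩ ℤ³`; the associated
monoid algebra is the Ehrhart ring `Ehr_k(P)`. -/
def simplexEhrhartMonoid : AddSubmonoid (Fin 4 → ℤ) where
  carrier := {x | 0 ≤ x 3 ∧ realify (proj3 x) ∈ ((x 3 : ℤ) : ℝ) • simplexP}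
  zero_mem' := by
    constructor
    · exact le_refl 0
    · have hne : simplexP.Nonempty := by
        refine ⟨realify ![0,0,0], subset_convexHull ℝ _ ?_⟩
        exact ⟨![0,0,0], by simp [simplexVerts], rfl⟩
      have h0 : (((0 : Fin 4 → ℤ) 3 : ℤ) : ℝ) • simplexP = 0 := by
        simpa using Set.zero_smul_set hne
      rw [h0]
      have : realify (proj3 (0 : Fin 4 → ℤ)) = 0 := by
        funext i; simp [realify, proj3]
      simp [this]
  add_mem' := by
    rintro x y ⟨hx3, hxP⟩ ⟨hy3, hyP⟩
    constructor
    · have : (x + y) 3 = x 3 + y 3 := rfl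
      omega
    · have hconv : Convex ℝ simplexP := convex_convexHull ℝ _
      have hsum : (((x + y) 3 : ℤ) : ℝ) • simplexP =
          ((x 3 : ℤ) : ℝ) • simplexP + ((y 3 : ℤ) : ℝ) • simplexP := by
        have : (((x + y) 3 : ℤ) : ℝ) = ((x 3 : ℤ) : ℝ) + ((y 3 : ℤ) : ℝ) := by
          push_cast [Pi.add_apply]; ring
        rw [this]
        exact (hconv.add_smul (p := ((x 3 : ℤ) : ℝ)) (q := ((y 3 : ℤ) : ℝ)) (by exact_mod_cast hx3) (by exact_mod_cast hy3))
      have hadd : realify (proj3 (x + y)) = realify (proj3 x) + realify (proj3 y) := by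
        funext i; simp [realify, proj3]
      rw [hsum, hadd]
      exact Set.add_mem_add hxP hyP

end MonoidHilbert


namespace MonoidHilbert

open scoped Pointwise

/-! ### Auxiliary: coordinates for the free monoid `simplexQ` -/

/-- linear combination of the four generators with coefficients `c`. -/
def Fc (c : Fin 4 → ℤ) : Fin 4 → ℤ :=
  ![c 1 + c 3, c 1 + c 2, c 2 + c 3, c 0 + c 1 + c 2 + c 3]

lemma Fc_add (c d : Fin 4 → ℤ) : Fc (c + d) = Fc c + Fc d := by
  funext j; fin_cases j <;> simp [Fc] <;> ring

lemma Fc_inj {c d : Fin 4 → ℤ} (h : Fc c = Fc d) : c = d := by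
  have h0 := congrFun h 0
  have h1 := congrFun h 1
  have h2 := congrFun h 2
  have h3 := congrFun h 3
  simp [Fc] at h0 h1 h2 h3
  funext j; fin_cases j <;> simp <;> omega

lemma Fc_mem (c : Fin 4 → ℤ) (hc : ∀ i, 0 ≤ c i) : Fc c ∈ simplexQ := by
  have key : Fc c = (c 0).toNat • ![0,0,0,1] + (c 1).toNat • ![1,1,0,1]
      + (c 2).toNat • ![0,1,1,1] + (c 3).toNat • ![1,0,1,1] := by
    funext j
    have e0 := Int.toNat_of_nonneg (hc 0)
    have e1 := Int.toNat_of_nonneg (hc 1)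
    have e2 := Int.toNat_of_nonneg (hc 2)
    have e3 := Int.toNat_of_nonneg (hc 3)
    fin_cases j <;>
      simp [Fc, Pi.smul_apply] <;> omega
  rw [key]
  have g0 : (![0,0,0,1] : Fin 4 → ℤ) ∈ simplexQ :=
    AddSubmonoid.subset_closure (by simp)
  have g1 : (![1,1,0,1] : Fin 4 → ℤ) ∈ simplexQ :=
    AddSubmonoid.subset_closure (by simp)
  have g2 : (![0,1,1,1] : Fin 4 → ℤ) ∈ simplexQ :=
    AddSubmonoid.subset_closure (by simp)
  have g3 : (![1,0,1,1] : Fin 4 → ℤ) ∈ simplexQ :=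
    AddSubmonoid.subset_closure (by simp)
  exact AddSubmonoid.add_mem _ (AddSubmonoid.add_mem _ (AddSubmonoid.add_mem _
    (AddSubmonoid.nsmul_mem _ g0 _) (AddSubmonoid.nsmul_mem _ g1 _))
    (AddSubmonoid.nsmul_mem _ g2 _)) (AddSubmonoid.nsmul_mem _ g3 _)

lemma mem_simplexQ_iff {x : Fin 4 → ℤ} :
    x ∈ simplexQ ↔ ∃ c : Fin 4 → ℤ, (∀ i, 0 ≤ c i) ∧ x = Fc c := by
  constructor
  · intro hx
    refine AddSubmonoid.closure_induction ?_ ?_ ?_ hx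
    · intro y hy
      simp only [Set.mem_insert_iff, Set.mem_singleton_iff] at hy
      rcases hy with h | h | h | h
      · exact ⟨![1,0,0,0], by decide, by subst h; decide⟩
      · exact ⟨![0,1,0,0], by decide, by subst h; decide⟩
      · exact ⟨![0,0,1,0], by decide, by subst h; decide⟩
      · exact ⟨![0,0,0,1], by decide, by subst h; decide⟩
    · exact ⟨0, by decide, by decide⟩
    · rintro a b _ _ ⟨c, hc, rfl⟩ ⟨d, hd, rfl⟩
      exact ⟨c + d, fun i => by have := hc i; have := hd i; simp [Pi.add_apply]; omega,
        (Fc_add c d).symm⟩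
  · rintro ⟨c, hc, rfl⟩; exact Fc_mem c hc

/-- hom from Finsupp to simplexQ -/
def homN : (Fin 4 →₀ ℕ) →+ simplexQ where
  toFun a := ⟨Fc (fun i => (a i : ℤ)), mem_simplexQ_iff.2 ⟨_, fun i => Int.ofNat_nonneg _, rfl⟩⟩
  map_zero' := by
    apply Subtype.ext; simp; funext j; fin_cases j <;> simp [Fc]
  map_add' a b := by
    apply Subtype.ext
    show Fc (fun i => (((a + b) i : ℕ) : ℤ)) = Fc (fun i => ((a i : ℕ) : ℤ)) + Fc (fun i => ((b i : ℕ) : ℤ))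
    rw [← Fc_add]
    congr 1

lemma homN_bij : Function.Bijective homN := by
  constructor
  · intro a b hab
    have h' : Fc (fun i => ((a i : ℕ) : ℤ)) = Fc (fun i => ((b i : ℕ) : ℤ)) :=
      congrArg Subtype.val hab
    have := Fc_inj h'
    ext i
    exact_mod_cast congrFun this i
  · rintro ⟨x, hx⟩
    obtain ⟨c, hc, rfl⟩ := mem_simplexQ_iff.1 hx
    refine ⟨Finsupp.equivFunOnFinite.symm (fun i => (c i).toNat), ?_⟩
    apply Subtype.ext
    show Fc (fun i => ((Finsupp.equivFunOnFinite.symm (fun i => (c i).toNat)) i : ℤ)) = Fc c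
    have hfun : (fun i => (((Finsupp.equivFunOnFinite.symm (fun i => (c i).toNat)) i : ℕ) : ℤ)) = c := by
      funext i
      simp only [Finsupp.coe_equivFunOnFinite_symm]
      exact Int.toNat_of_nonneg (hc i)
    rw [hfun]

def eQ : (Fin 4 →₀ ℕ) ≃+ simplexQ := AddEquiv.ofBijective homN homN_bij

/-! ### Saturation of `simplexQ` -/

lemma Fc_neg (c : Fin 4 → ℤ) : Fc (-c) = - Fc c := by
  funext j; fin_cases j <;> simp [Fc] <;> ring

lemma grp_mem_iff {x : Fin 4 → ℤ} :
    x ∈ AddSubgroup.closure (simplexQ : Set (Fin 4 → ℤ)) ↔ ∃ c : Fin 4 → ℤ, x = Fc c := by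
  constructor
  · intro hx
    refine AddSubgroup.closure_induction ?_ ?_ ?_ ?_ hx
    · intro y hy
      obtain ⟨c, _, rfl⟩ := mem_simplexQ_iff.1 hy
      exact ⟨c, rfl⟩
    · exact ⟨0, by decide⟩
    · rintro a b _ _ ⟨c, rfl⟩ ⟨d, rfl⟩; exact ⟨c + d, (Fc_add c d).symm⟩
    · rintro a _ ⟨c, rfl⟩; exact ⟨-c, (Fc_neg c).symm⟩
  · rintro ⟨c, rfl⟩
    have h1 : Fc c = Fc (fun i => max (c i) 0) - Fc (fun i => max (-c i) 0) := by
      rw [eq_sub_iff_add_eq, ← Fc_add]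
      have harg : (c + fun i => max (-c i) 0) = (fun i => max (c i) 0) := by
        funext i; show c i + max (-c i) 0 = max (c i) 0; omega
      rw [harg]
    rw [h1]
    refine AddSubgroup.sub_mem _ ?_ ?_ <;>
      exact AddSubgroup.subset_closure (mem_simplexQ_iff.2 ⟨_, fun i => by positivity, rfl⟩)

lemma saturation_eq : saturation simplexQ = simplexQ := by
  ext x
  constructor
  · rintro ⟨hg, n, hn, hnx⟩
    obtain ⟨c, rfl⟩ := grp_mem_iff.1 hg
    obtain ⟨d, hd, hfd⟩ := mem_simplexQ_iff.1 hnx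
    have hsm : Fc ((n : ℤ) • c) = n • Fc c := by
      funext j; fin_cases j <;> simp [Fc] <;> ring
    have : Fc ((n : ℤ) • c) = Fc d := by rw [hsm, hfd]
    have hcd := Fc_inj this
    refine mem_simplexQ_iff.2 ⟨c, fun i => ?_, rfl⟩
    have := congrFun hcd i
    simp [Pi.smul_apply] at this
    have hdi := hd i
    rw [← this] at hdi
    have hn' : 0 < (n : ℤ) := by exact_mod_cast hn
    exact nonneg_of_mul_nonneg_right hdi hn'
  · intro hx
    refine ⟨AddSubgroup.subset_closure hx, 1, one_pos, by simpa using hx⟩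

/-! ### Inequality description of the simplex and the Ehrhart monoid -/

def halfP : Set (Fin 3 → ℝ) :=
  {p | 0 ≤ p 0 + p 1 - p 2 ∧ 0 ≤ p 1 + p 2 - p 0 ∧ 0 ≤ p 0 + p 2 - p 1 ∧ p 0 + p 1 + p 2 ≤ 2}

lemma convex_halfP : Convex ℝ halfP := by
  rintro x ⟨hx1, hx2, hx3, hx4⟩ y ⟨hy1, hy2, hy3, hy4⟩ a b ha hb hab
  refine ⟨?_, ?_, ?_, ?_⟩ <;> simp only [Pi.add_apply, Pi.smul_apply, smul_eq_mul] <;> nlinarith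

lemma simplexP_eq : simplexP = halfP := by
  apply le_antisymm
  · apply convexHull_min _ convex_halfP
    rintro p ⟨z, hz, rfl⟩
    simp only [simplexVerts, Set.mem_insert_iff, Set.mem_singleton_iff] at hz
    rcases hz with rfl | rfl | rfl | rfl <;>
      refine ⟨?_, ?_, ?_, ?_⟩ <;> norm_num [realify, Matrix.cons_val_two, Matrix.tail_cons, Matrix.head_cons]
  · intro p hp
    obtain ⟨h1, h2, h3, h4⟩ := hp
    set w : Fin 4 → ℝ := ![1 - (p 0 + p 1 + p 2)/2, (p 0 + p 1 - p 2)/2, (p 1 + p 2 - p 0)/2, (p 0 + p 2 - p 1)/2] with hw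
    set z : Fin 4 → (Fin 3 → ℝ) := ![realify ![0,0,0], realify ![1,1,0], realify ![0,1,1], realify ![1,0,1]] with hz
    have hws : ∑ i, w i = 1 := by
      simp [hw, Fin.sum_univ_four]; ring
    have hcm : Finset.univ.centerMass w z = p := by
      rw [Finset.centerMass]
      rw [hws]
      funext j
      simp [hz, Fin.sum_univ_four, hw, realify]
      fin_cases j <;> simp <;> ring
    rw [← hcm]
    apply Finset.centerMass_mem_convexHull
    · intro i _
      fin_cases i <;> simp [hw] <;> linarith
    · rw [hws]; norm_num
    · intro i _
      fin_cases i <;> exact ⟨_, by simp [simplexVerts], rfl⟩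

/-- The membership inequalities for the Ehrhart monoid. -/
def EIneq (x : Fin 4 → ℤ) : Prop :=
  0 ≤ x 3 ∧ 0 ≤ x 0 + x 1 - x 2 ∧ 0 ≤ x 1 + x 2 - x 0 ∧
    0 ≤ x 0 + x 2 - x 1 ∧ x 0 + x 1 + x 2 ≤ 2 * x 3

lemma mem_E_iff {x : Fin 4 → ℤ} : x ∈ simplexEhrhartMonoid ↔ EIneq x := by
  have hP : simplexP.Nonempty := by
    rw [simplexP_eq]; exact ⟨0, by norm_num [halfP]⟩
  constructor
  · rintro ⟨h3, hmem⟩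
    rcases eq_or_lt_of_le h3 with h0 | hpos
    · rw [← h0] at hmem
      push_cast at hmem
      rw [Set.zero_smul_set hP] at hmem
      simp only [Set.mem_zero] at hmem
      have e0 : x 0 = 0 := by
        have := congrFun hmem 0; simpa [realify, proj3] using this
      have e1 : x 1 = 0 := by
        have := congrFun hmem 1; simpa [realify, proj3] using this
      have e2 : x 2 = 0 := by
        have := congrFun hmem 2; simpa [realify, proj3] using this
      exact ⟨h3, by omega, by omega, by omega, by omega⟩
    · obtain ⟨s, hs, hsx⟩ := hmem
      rw [simplexP_eq] at hs
      obtain ⟨hs1, hs2, hs3, hs4⟩ := hs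
      have hn : (0:ℝ) < (x 3 : ℝ) := by exact_mod_cast hpos
      have e0 : (x 0 : ℝ) = (x 3 : ℝ) * s 0 := (congrFun hsx 0).symm
      have e1 : (x 1 : ℝ) = (x 3 : ℝ) * s 1 := (congrFun hsx 1).symm
      have e2 : (x 2 : ℝ) = (x 3 : ℝ) * s 2 := (congrFun hsx 2).symm
      refine ⟨h3, ?_, ?_, ?_, ?_⟩
      · have : (0:ℝ) ≤ (x 0 : ℝ) + x 1 - x 2 := by rw [e0, e1, e2]; nlinarith
        exact_mod_cast this
      · have : (0:ℝ) ≤ (x 1 : ℝ) + x 2 - x 0 := by rw [e0, e1, e2]; nlinarith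
        exact_mod_cast this
      · have : (0:ℝ) ≤ (x 0 : ℝ) + x 2 - x 1 := by rw [e0, e1, e2]; nlinarith
        exact_mod_cast this
      · have : (x 0 : ℝ) + x 1 + x 2 ≤ 2 * (x 3 : ℝ) := by rw [e0, e1, e2]; nlinarith
        exact_mod_cast this
  · rintro ⟨h3, h1, h2, h4, h5⟩
    refine ⟨h3, ?_⟩
    rcases eq_or_lt_of_le h3 with h0 | hpos
    · rw [← h0]
      push_cast
      rw [Set.zero_smul_set hP]
      have e0 : x 0 = 0 := by omega
      have e1 : x 1 = 0 := by omega
      have e2 : x 2 = 0 := by omega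
      have : realify (proj3 x) = 0 := by
        funext j
        fin_cases j
        · show (x 0 : ℝ) = 0; rw [e0]; norm_num
        · show (x 1 : ℝ) = 0; rw [e1]; norm_num
        · show (x 2 : ℝ) = 0; rw [e2]; norm_num
      simp [this]
    · have hn : (0:ℝ) < (x 3 : ℝ) := by exact_mod_cast hpos
      refine ⟨fun j => (x j.castSucc : ℝ) / (x 3 : ℝ), ?_, ?_⟩
      · rw [simplexP_eq]
        have c1 : (0:ℝ) ≤ (x 0 : ℝ) + x 1 - x 2 := by exact_mod_cast h1
        have c2 : (0:ℝ) ≤ (x 1 : ℝ) + x 2 - x 0 := by exact_mod_cast h2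
        have c3 : (0:ℝ) ≤ (x 0 : ℝ) + x 2 - x 1 := by exact_mod_cast h4
        have c4 : (x 0 : ℝ) + x 1 + x 2 ≤ 2 * (x 3 : ℝ) := by exact_mod_cast h5
        refine ⟨?_, ?_, ?_, ?_⟩
        · show (0:ℝ) ≤ (x 0:ℝ)/(x 3) + (x 1:ℝ)/(x 3) - (x 2:ℝ)/(x 3)
          rw [← add_div, div_sub_div_same]
          exact div_nonneg c1 hn.le
        · show (0:ℝ) ≤ (x 1:ℝ)/(x 3) + (x 2:ℝ)/(x 3) - (x 0:ℝ)/(x 3)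
          rw [← add_div, div_sub_div_same]
          exact div_nonneg c2 hn.le
        · show (0:ℝ) ≤ (x 0:ℝ)/(x 3) + (x 2:ℝ)/(x 3) - (x 1:ℝ)/(x 3)
          rw [← add_div, div_sub_div_same]
          exact div_nonneg c3 hn.le
        · show (x 0:ℝ)/(x 3) + (x 1:ℝ)/(x 3) + (x 2:ℝ)/(x 3) ≤ 2
          rw [← add_div, ← add_div, div_le_iff₀ hn]
          linarith
      · funext j
        show (x 3 : ℝ) * ((x j.castSucc : ℝ) / (x 3 : ℝ)) = realify (proj3 x) j
        field_simp [realify, proj3]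
        rfl

/-! ### Normal form in the Ehrhart monoid -/

/-- parity part of the normal form -/
def eP (x : Fin 4 → ℤ) : ℤ := (x 0 + x 1 + x 2) % 2

/-- coefficient part of the normal form -/
def cP (x : Fin 4 → ℤ) : Fin 4 → ℤ :=
  ![x 3 - (x 0 + x 1 + x 2 + eP x)/2, (x 0 + x 1 - x 2 - eP x)/2,
    (x 1 + x 2 - x 0 - eP x)/2, (x 0 + x 2 - x 1 - eP x)/2]

lemma eP01 (x : Fin 4 → ℤ) : eP x = 0 ∨ eP x = 1 := by unfold eP; omega

lemma cP_nonneg {x : Fin 4 → ℤ} (hx : EIneq x) : ∀ i, 0 ≤ cP x i := by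
  obtain ⟨h1, h2, h3, h4, h5⟩ := hx
  intro i
  fin_cases i <;> simp [cP, eP] <;> omega

lemma recon {x : Fin 4 → ℤ} (hx : EIneq x) :
    x 0 = cP x 1 + cP x 3 + eP x ∧ x 1 = cP x 1 + cP x 2 + eP x ∧
    x 2 = cP x 2 + cP x 3 + eP x ∧ x 3 = cP x 0 + cP x 1 + cP x 2 + cP x 3 + 2 * eP x := by
  obtain ⟨h1, h2, h3, h4, h5⟩ := hx
  simp only [cP, eP]
  refine ⟨?_, ?_, ?_, ?_⟩ <;> simp <;> omega

lemma cP_add_low {x y : Fin 4 → ℤ} (h : eP x + eP y ≤ 1) :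
    (∀ i, cP (x + y) i = cP x i + cP y i) ∧ eP (x + y) = eP x + eP y := by
  have hx0 : (x + y) 0 = x 0 + y 0 := rfl
  have hx1 : (x + y) 1 = x 1 + y 1 := rfl
  have hx2 : (x + y) 2 = x 2 + y 2 := rfl
  have hx3 : (x + y) 3 = x 3 + y 3 := rfl
  have he : eP (x + y) = eP x + eP y := by simp only [eP, hx0, hx1, hx2]; unfold eP at h; omega
  refine ⟨fun i => ?_, he⟩
  unfold eP at h
  fin_cases i <;> simp [cP, eP] <;> omega

lemma cP_add_high {x y : Fin 4 → ℤ} (hx : eP x = 1) (hy : eP y = 1) :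
    (∀ i, cP (x + y) i = cP x i + cP y i + 1) ∧ eP (x + y) = 0 := by
  have hx0 : (x + y) 0 = x 0 + y 0 := rfl
  have hx1 : (x + y) 1 = x 1 + y 1 := rfl
  have hx2 : (x + y) 2 = x 2 + y 2 := rfl
  have hx3 : (x + y) 3 = x 3 + y 3 := rfl
  have he : eP (x + y) = 0 := by simp only [eP, hx0, hx1, hx2]; unfold eP at hx hy; omega
  refine ⟨fun i => ?_, he⟩
  unfold eP at hx hy
  fin_cases i <;> simp [cP, eP] <;> omega

/-! ### The Ehrhart ring as a hypersurface -/

/-- the five generators -/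
def gv : Fin 5 → (Fin 4 → ℤ) := ![![0,0,0,1], ![1,1,0,1], ![0,1,1,1], ![1,0,1,1], ![1,1,1,2]]

lemma gv_mem (i : Fin 5) : gv i ∈ simplexEhrhartMonoid := by
  rw [mem_E_iff]
  fin_cases i <;> exact ⟨by decide, by decide, by decide, by decide, by decide⟩

def gE (i : Fin 5) : simplexEhrhartMonoid := ⟨gv i, gv_mem i⟩

section Alg

variable (k : Type) [Field k]

open MvPolynomial

def relP : MvPolynomial (Fin 5) k := X 0 * X 1 * X 2 * X 3 - (X 4) ^ 2
def IP : Ideal (MvPolynomial (Fin 5) k) := Ideal.span {relP k}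

def φ0 : MvPolynomial (Fin 5) k →ₐ[k] AddMonoidAlgebra k simplexEhrhartMonoid :=
  aeval fun i => AddMonoidAlgebra.single (gE i) 1

lemma gsum : gE 0 + gE 1 + gE 2 + gE 3 = 2 • gE 4 := by
  apply Subtype.ext
  show gv 0 + gv 1 + gv 2 + gv 3 = 2 • gv 4
  funext j
  fin_cases j <;> simp [gv]

lemma φ0_rel : φ0 k (relP k) = 0 := by
  simp only [relP, φ0, map_sub, map_mul, map_pow, aeval_X]
  rw [AddMonoidAlgebra.single_mul_single, AddMonoidAlgebra.single_mul_single,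
    AddMonoidAlgebra.single_mul_single, AddMonoidAlgebra.single_pow]
  rw [sub_eq_zero]
  congr 1
  · exact gsum
  · norm_num

def φbar : (MvPolynomial (Fin 5) k ⧸ IP k) →ₐ[k] AddMonoidAlgebra k simplexEhrhartMonoid :=
  Ideal.Quotient.liftₐ (IP k) (φ0 k) (by
    intro a ha
    obtain ⟨c, hc⟩ := Ideal.mem_span_singleton.1 ha
    rw [hc, map_mul, φ0_rel, zero_mul])

/-- the normal-form monomial exponent vector -/
def nf5 (x : Fin 4 → ℤ) : Fin 5 →₀ ℕ :=
  Finsupp.equivFunOnFinite.symm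
    ![(cP x 0).toNat, (cP x 1).toNat, (cP x 2).toNat, (cP x 3).toNat, (eP x).toNat]

def mE : Multiplicative simplexEhrhartMonoid →* (MvPolynomial (Fin 5) k ⧸ IP k) where
  toFun x := Ideal.Quotient.mk (IP k) (monomial (nf5 ((x.toAdd : simplexEhrhartMonoid) : Fin 4 → ℤ)) 1)
  map_one' := by
    have h : nf5 (((1 : Multiplicative simplexEhrhartMonoid).toAdd : simplexEhrhartMonoid) : Fin 4 → ℤ) = 0 := by
      ext j
      fin_cases j <;> simp [nf5, cP, eP] <;> decide
    rw [h]
    simp [monomial_zero']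
  map_mul' x y := by
    have hx := mem_E_iff.1 (x.toAdd : simplexEhrhartMonoid).2
    have hy := mem_E_iff.1 (y.toAdd : simplexEhrhartMonoid).2
    set a : Fin 4 → ℤ := ((x.toAdd : simplexEhrhartMonoid) : Fin 4 → ℤ) with ha
    set b : Fin 4 → ℤ := ((y.toAdd : simplexEhrhartMonoid) : Fin 4 → ℤ) with hb
    have hxy : (((x * y).toAdd : simplexEhrhartMonoid) : Fin 4 → ℤ) = a + b := rfl
    rw [hxy, ← map_mul, monomial_mul, one_mul]
    have hna := cP_nonneg hx
    have hnb := cP_nonneg hy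
    have hEa := eP01 a
    have hEb := eP01 b
    by_cases hle : eP a + eP b ≤ 1
    · obtain ⟨hc, he⟩ := cP_add_low hle
      have h0 := hc 0; have h1 := hc 1; have h2 := hc 2; have h3 := hc 3
      have n0 := hna 0; have n1 := hna 1; have n2 := hna 2; have n3 := hna 3
      have m0 := hnb 0; have m1 := hnb 1; have m2 := hnb 2; have m3 := hnb 3
      have key : nf5 (a + b) = nf5 a + nf5 b := by
        ext j
        fin_cases j <;> simp [nf5, Finsupp.add_apply] <;> omega
      rw [key]
    · have hea : eP a = 1 := by omega
      have heb : eP b = 1 := by omega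
      obtain ⟨hc, he⟩ := cP_add_high hea heb
      have h0 := hc 0; have h1 := hc 1; have h2 := hc 2; have h3 := hc 3
      have n0 := hna 0; have n1 := hna 1; have n2 := hna 2; have n3 := hna 3
      have m0 := hnb 0; have m1 := hnb 1; have m2 := hnb 2; have m3 := hnb 3
      rw [Ideal.Quotient.eq]
      set m : Fin 5 →₀ ℕ := Finsupp.equivFunOnFinite.symm
        ![(cP a 0).toNat + (cP b 0).toNat, (cP a 1).toNat + (cP b 1).toNat,
          (cP a 2).toNat + (cP b 2).toNat, (cP a 3).toNat + (cP b 3).toNat, 0] with hm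
      set s : Fin 5 →₀ ℕ :=
        Finsupp.single 0 1 + Finsupp.single 1 1 + Finsupp.single 2 1 + Finsupp.single 3 1 with hs
      have e1 : nf5 (a + b) = m + s := by
        ext j
        fin_cases j <;>
          simp [nf5, hm, hs, Finsupp.add_apply, Finsupp.single_apply] <;> omega
      have e2 : nf5 a + nf5 b = m + Finsupp.single 4 2 := by
        ext j
        fin_cases j <;>
          simp [nf5, hm, Finsupp.add_apply, Finsupp.single_apply] <;> omega
      have hX : (X 0 * X 1 * X 2 * X 3 : MvPolynomial (Fin 5) k) = monomial s 1 := by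
        rw [hs]
        rw [show (X 0 : MvPolynomial (Fin 5) k) = X 0 ^ 1 from (pow_one _).symm,
          show (X 1 : MvPolynomial (Fin 5) k) = X 1 ^ 1 from (pow_one _).symm,
          show (X 2 : MvPolynomial (Fin 5) k) = X 2 ^ 1 from (pow_one _).symm,
          show (X 3 : MvPolynomial (Fin 5) k) = X 3 ^ 1 from (pow_one _).symm]
        simp only [X_pow_eq_monomial, monomial_mul, mul_one]
      have hY : ((X 4 : MvPolynomial (Fin 5) k)) ^ 2 = monomial (Finsupp.single 4 2) 1 :=
        X_pow_eq_monomial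
      have key : (monomial (nf5 (a + b)) (1:k)) - monomial (nf5 a + nf5 b) 1
          = relP k * monomial m 1 := by
        rw [e1, e2, relP, sub_mul, hX, hY, monomial_mul, monomial_mul, one_mul]
        rw [add_comm s m, add_comm (Finsupp.single 4 2) m]
      rw [key]
      exact Ideal.mem_span_singleton.2 ⟨monomial m 1, rfl⟩

def ψ : AddMonoidAlgebra k simplexEhrhartMonoid →ₐ[k] (MvPolynomial (Fin 5) k ⧸ IP k) :=
  AddMonoidAlgebra.lift k _ simplexEhrhartMonoid (mE k)

lemma nf5_gv (i : Fin 5) : nf5 (gv i) = Finsupp.single i 1 := by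
  ext j
  fin_cases i <;> fin_cases j <;>
    simp [nf5, gv, cP, eP, Finsupp.single_apply, Matrix.vecHead, Matrix.vecTail] <;> decide

lemma comp1 : (ψ k).comp (φbar k) = AlgHom.id k (MvPolynomial (Fin 5) k ⧸ IP k) := by
  apply Ideal.Quotient.algHom_ext
  apply MvPolynomial.algHom_ext
  intro i
  show (ψ k) ((φbar k) (Ideal.Quotient.mk (IP k) (X i))) = Ideal.Quotient.mk (IP k) (X i)
  have h1 : (φbar k) (Ideal.Quotient.mk (IP k) (X i)) = AddMonoidAlgebra.single (gE i) 1 := by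
    show (φbar k) (Ideal.Quotient.mkₐ k (IP k) (X i)) = _
    rw [φbar, Ideal.Quotient.liftₐ_apply]
    erw [Ideal.Quotient.lift_mk]
    simp [φ0]
  rw [h1]
  show (AddMonoidAlgebra.lift k _ simplexEhrhartMonoid (mE k)) (AddMonoidAlgebra.single (gE i) 1) = _
  rw [AddMonoidAlgebra.lift_single]
  show (1:k) • (Ideal.Quotient.mk (IP k) (monomial (nf5 (gv i)) 1)) = _
  rw [one_smul, nf5_gv]
  congr 1

lemma single_prod (n : Fin 5 → ℕ) :
    (∏ i : Fin 5, (AddMonoidAlgebra.single (n i • gE i) (1:k))) =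
      AddMonoidAlgebra.single (∑ i : Fin 5, n i • gE i) 1 := by
  rw [Fin.prod_univ_five, Fin.sum_univ_five]
  rw [AddMonoidAlgebra.single_mul_single, AddMonoidAlgebra.single_mul_single,
    AddMonoidAlgebra.single_mul_single, AddMonoidAlgebra.single_mul_single]
  norm_num

lemma comp2 : (φbar k).comp (ψ k) = AlgHom.id k (AddMonoidAlgebra k simplexEhrhartMonoid) := by
  apply AddMonoidAlgebra.algHom_ext
  intro x
  show (φbar k) ((ψ k) (AddMonoidAlgebra.single x 1)) = AddMonoidAlgebra.single x 1
  rw [ψ, AddMonoidAlgebra.lift_single, one_smul]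
  show (φbar k) (Ideal.Quotient.mk (IP k) (monomial (nf5 (x : Fin 4 → ℤ)) 1)) = _
  have h1 : (φbar k) (Ideal.Quotient.mk (IP k) (monomial (nf5 (x : Fin 4 → ℤ)) 1))
      = (φ0 k) (monomial (nf5 (x : Fin 4 → ℤ)) 1) := by
    rw [φbar, Ideal.Quotient.liftₐ_apply]
    erw [Ideal.Quotient.lift_mk]
  rw [h1, φ0, aeval_monomial, map_one, one_mul]
  rw [Finsupp.prod_fintype _ _ (fun i => pow_zero _)]
  have h2 : ∀ i : Fin 5, (AddMonoidAlgebra.single (gE i) (1:k)) ^ (nf5 (x : Fin 4 → ℤ) i)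
      = AddMonoidAlgebra.single ((nf5 (x : Fin 4 → ℤ) i) • gE i) 1 := by
    intro i
    rw [AddMonoidAlgebra.single_pow, one_pow]
  simp only [h2]
  rw [single_prod k]
  congr 1
  have hx := mem_E_iff.1 x.2
  have hcn := cP_nonneg hx
  obtain ⟨r0, r1, r2, r3⟩ := recon hx
  have he := eP01 (x : Fin 4 → ℤ)
  apply Subtype.ext
  show (∑ i : Fin 5, (nf5 (x : Fin 4 → ℤ) i • gE i : simplexEhrhartMonoid) : Fin 4 → ℤ) = (x : Fin 4 → ℤ)
  have hco : (∑ i : Fin 5, (nf5 (x : Fin 4 → ℤ) i • gE i : simplexEhrhartMonoid) : Fin 4 → ℤ)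
      = ∑ i : Fin 5, (nf5 (x : Fin 4 → ℤ) i) • gv i := by
    rw [Fin.sum_univ_five, Fin.sum_univ_five]
    rfl
  rw [hco]
  funext j
  have n0 := hcn 0; have n1 := hcn 1; have n2 := hcn 2; have n3 := hcn 3
  fin_cases j <;>
    simp [nf5, gv, Fin.sum_univ_five, Matrix.vecHead, Matrix.vecTail, Function.comp,
      Pi.smul_apply, smul_eq_mul] <;> omega
  exact Subsingleton.elim _ _

def part3equiv : AddMonoidAlgebra k simplexEhrhartMonoid ≃ₐ[k] (MvPolynomial (Fin 5) k ⧸ IP k) :=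
  AlgEquiv.ofAlgHom (ψ k) (φbar k) (comp1 k) (comp2 k)

end Alg

/-! ### `simplexQ < simplexEhrhartMonoid` -/

lemma Q_lt_E : simplexQ < simplexEhrhartMonoid := by
  have hle : simplexQ ≤ simplexEhrhartMonoid := by
    rw [simplexQ]
    refine (AddSubmonoid.closure_le).2 ?_
    intro y hy
    simp only [Set.mem_insert_iff, Set.mem_singleton_iff] at hy
    rcases hy with rfl | rfl | rfl | rfl <;>
      exact mem_E_iff.2 ⟨by decide, by decide, by decide, by decide, by decide⟩
  have hw : (![1,1,1,2] : Fin 4 → ℤ) ∈ simplexEhrhartMonoid :=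
    mem_E_iff.2 ⟨by decide, by decide, by decide, by decide, by decide⟩
  have hnq : (![1,1,1,2] : Fin 4 → ℤ) ∉ simplexQ := by
    intro hq
    obtain ⟨c, hc, heq⟩ := mem_simplexQ_iff.1 hq
    have h0 := congrFun heq 0
    have h1 := congrFun heq 1
    have h2 := congrFun heq 2
    simp [Fc] at h0 h1 h2
    omega
  exact lt_of_le_of_ne hle (fun h => hnq (by rw [h]; exact hw))

end MonoidHilbert

namespace MonoidHilbert

open MvPolynomial in
/-- **Theorem.** For the simplex `P = conv{(0,0,0),(1,1,0),(0,1,1),(1,0,1)}`, the toric ring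
`k[Q_P]` is a polynomial ring in 4 variables (and `Q_P` is its own normalization), while the
Ehrhart ring of `P` is isomorphic to `k[X₁,X₂,X₃,X₄,Y]/(X₁X₂X₃X₄ − Y²)` and strictly
contains `k[Q_P]`. -/
theorem simplex_toricRing_ne_ehrhartRing (k : Type) [Field k] :
    Nonempty (AddMonoidAlgebra k simplexQ ≃ₐ[k] MvPolynomial (Fin 4) k) ∧
    saturation simplexQ = simplexQ ∧
    Nonempty (AddMonoidAlgebra k simplexEhrhartMonoid ≃ₐ[k]
      (MvPolynomial (Fin 5) k ⧸
        Ideal.span {(X 0 * X 1 * X 2 * X 3 - (X 4) ^ 2 : MvPolynomial (Fin 5) k)})) ∧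
    simplexQ < simplexEhrhartMonoid := by
  refine ⟨⟨AddMonoidAlgebra.domCongr k k eQ.symm⟩, saturation_eq, ⟨part3equiv k⟩, Q_lt_E⟩

end MonoidHilbert
end
end

section
/- Let G_k be the graph consisting of a triangle (u_1,u_2,u_3), a triangle (u_4,u_5,u_6), and for each i = 1,…,k a path u_3 — v'_i — v_i — u_6 together with the edge u_3 — v_i (so edges u_3v'_i, v'_iv_i, v_iu_3, v_iu_6). Let Q = Q_{G_k} be its edge monoid with normalization Q̄, and let q = e_{u_1}+⋯+e_{u_6}. Then the set of holes satisfies Q̄ ∖ Q = q + Q', where Q' = Q_{G'} is the edge monoid of the graph G' obtained from G_k by deleting v_1,…,v_k and all incident edges. -/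
open scoped Classical

noncomputable section

open scoped Pointwise

namespace MonoidHilbert

/-- The vertex set of the graph `G_k`: six vertices `u₁,…,u₆`, then `v₁,…,v_k`,
then `v'₁,…,v'_k`. -/
abbrev GkV (k : ℕ) := Fin 6 ⊕ (Fin k ⊕ Fin k)

/-- The edges of `G_k`: the two triangles `(u₁,u₂,u₃)` and `(u₄,u₅,u₆)`, and for each `i`
the edges `u₃v'ᵢ`, `v'ᵢvᵢ`, `vᵢu₃`, `vᵢu₆`. -/
def GkEdges (k : ℕ) : Set (Sym2 (GkV k)) :=
  {s(Sum.inl 0, Sum.inl 1), s(Sum.inl 0, Sum.inl 2), s(Sum.inl 1, Sum.inl 2),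
   s(Sum.inl 3, Sum.inl 4), s(Sum.inl 3, Sum.inl 5), s(Sum.inl 4, Sum.inl 5)} ∪
  ⋃ i : Fin k,
    {s(Sum.inl 2, Sum.inr (Sum.inr i)), s(Sum.inr (Sum.inr i), Sum.inr (Sum.inl i)),
     s(Sum.inr (Sum.inl i), Sum.inl 2), s(Sum.inr (Sum.inl i), Sum.inl 5)}

/-- The graph `G_k` of the paper: two triangles joined through `k` paths. -/
def Gk (k : ℕ) : SimpleGraph (GkV k) := SimpleGraph.fromEdgeSet (GkEdges k)

/-- The graph `G'` obtained from `G_k` by deleting `v₁,…,v_k` and all incident edges. -/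
def Gk' (k : ℕ) : SimpleGraph (GkV k) :=
  SimpleGraph.fromEdgeSet
    ({s(Sum.inl 0, Sum.inl 1), s(Sum.inl 0, Sum.inl 2), s(Sum.inl 1, Sum.inl 2),
      s(Sum.inl 3, Sum.inl 4), s(Sum.inl 3, Sum.inl 5), s(Sum.inl 4, Sum.inl 5)} ∪
     ⋃ i : Fin k, {s(Sum.inl 2, Sum.inr (Sum.inr i))})

/-- The vector `q = e_{u₁}+⋯+e_{u₆}`. -/
def qHole (k : ℕ) : GkV k → ℤ := Sum.elim (fun _ => 1) (fun _ => 0)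

end MonoidHilbert

namespace MonoidHilbert

section Aux

variable {k : ℕ}


def sB (x : GkV k → ℤ) : ℤ := ∑ i, x (Sum.inr (Sum.inl i))
def sC (x : GkV k → ℤ) : ℤ := ∑ i, x (Sum.inr (Sum.inr i))
def sM (x : GkV k → ℤ) : ℤ := ∑ i, min (x (Sum.inr (Sum.inl i))) (x (Sum.inr (Sum.inr i)))

lemma edgeVec_comm (u v : GkV k) : edgeVec u v = edgeVec v u := by
  funext w; simp [edgeVec]; ring

lemma sB_add (x y : GkV k → ℤ) : sB (x + y) = sB x + sB y := by
  simp [sB, Finset.sum_add_distrib]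
lemma sC_add (x y : GkV k → ℤ) : sC (x + y) = sC x + sC y := by
  simp [sC, Finset.sum_add_distrib]
lemma sM_superadd (x y : GkV k → ℤ) : sM x + sM y ≤ sM (x + y) := by
  rw [sM, sM, sM, ← Finset.sum_add_distrib]
  apply Finset.sum_le_sum
  intro i _
  simp only [Pi.add_apply]
  exact le_min (add_le_add (min_le_left _ _) (min_le_left _ _))
    (add_le_add (min_le_right _ _) (min_le_right _ _))

lemma sB_smul (n : ℕ) (x : GkV k → ℤ) : sB (n • x) = n * sB x := by
  simp [sB, Finset.mul_sum]
lemma sC_smul (n : ℕ) (x : GkV k → ℤ) : sC (n • x) = n * sC x := by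
  simp [sC, Finset.mul_sum]
lemma sM_smul (n : ℕ) (x : GkV k → ℤ) : sM (n • x) = n * sM x := by
  rw [sM, sM, Finset.mul_sum]
  congr 1; funext i
  simp only [Pi.smul_apply, nsmul_eq_mul]
  rcases le_total (x (Sum.inr (Sum.inl i))) (x (Sum.inr (Sum.inr i))) with h | h
  · rw [min_eq_left h, min_eq_left (mul_le_mul_of_nonneg_left h (Int.natCast_nonneg n))]
  · rw [min_eq_right h, min_eq_right (mul_le_mul_of_nonneg_left h (Int.natCast_nonneg n))]

-- distribution lemma
lemma distribute : ∀ (k : ℕ) (cap : Fin k → ℤ) (s : ℤ), (∀ i, 0 ≤ cap i) → 0 ≤ s →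
    s ≤ ∑ i, cap i → ∃ f : Fin k → ℤ, (∀ i, 0 ≤ f i ∧ f i ≤ cap i) ∧ ∑ i, f i = s := by
  intro k
  induction k with
  | zero => intro cap s _ hs hle; exact ⟨fun i => 0, fun i => i.elim0, (le_antisymm (by simpa using hle) hs).symm⟩
  | succ n ih =>
    intro cap s hcap hs hle
    rw [Fin.sum_univ_succ] at hle
    obtain ⟨f, hf, hsum⟩ := ih (fun (i : Fin n) => cap i.succ) (s - min s (cap 0))
      (fun i => hcap _) (by have := min_le_left s (cap 0); omega)
      (by show s - min s (cap 0) ≤ ∑ i : Fin n, cap i.succ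
          rcases le_total s (cap 0) with h | h
          · have h0 : (0:ℤ) ≤ ∑ i : Fin n, cap i.succ :=
              Finset.sum_nonneg (fun (i : Fin n) _ => hcap i.succ)
            rw [min_eq_left h]; omega
          · rw [min_eq_right h]; omega)
    refine ⟨Fin.cons (min s (cap 0)) f, ?_, ?_⟩
    · intro i
      refine Fin.cases ?_ ?_ i
      · exact ⟨by simpa using le_min hs (hcap 0), by simpa using min_le_right s (cap 0)⟩
      · intro j; simpa using hf j
    · rw [Fin.sum_univ_succ]; simp [hsum]




section adj
lemma adj01 : (Gk k).Adj (Sum.inl 0) (Sum.inl 1) := by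
  simp [Gk, GkEdges, SimpleGraph.fromEdgeSet_adj]
lemma adj02 : (Gk k).Adj (Sum.inl 0) (Sum.inl 2) := by
  simp [Gk, GkEdges, SimpleGraph.fromEdgeSet_adj]
lemma adj12 : (Gk k).Adj (Sum.inl 1) (Sum.inl 2) := by
  simp [Gk, GkEdges, SimpleGraph.fromEdgeSet_adj]
lemma adj34 : (Gk k).Adj (Sum.inl 3) (Sum.inl 4) := by
  simp [Gk, GkEdges, SimpleGraph.fromEdgeSet_adj]
lemma adj35 : (Gk k).Adj (Sum.inl 3) (Sum.inl 5) := by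
  simp [Gk, GkEdges, SimpleGraph.fromEdgeSet_adj]
lemma adj45 : (Gk k).Adj (Sum.inl 4) (Sum.inl 5) := by
  simp [Gk, GkEdges, SimpleGraph.fromEdgeSet_adj]
lemma adjA (i : Fin k) : (Gk k).Adj (Sum.inl 2) (Sum.inr (Sum.inr i)) := by
  rw [Gk, SimpleGraph.fromEdgeSet_adj]
  exact ⟨Or.inr (Set.mem_iUnion.2 ⟨i, by simp⟩), by simp⟩
lemma adjB (i : Fin k) : (Gk k).Adj (Sum.inr (Sum.inr i)) (Sum.inr (Sum.inl i)) := by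
  rw [Gk, SimpleGraph.fromEdgeSet_adj]
  exact ⟨Or.inr (Set.mem_iUnion.2 ⟨i, by simp⟩), by simp⟩
lemma adjC (i : Fin k) : (Gk k).Adj (Sum.inr (Sum.inl i)) (Sum.inl 2) := by
  rw [Gk, SimpleGraph.fromEdgeSet_adj]
  exact ⟨Or.inr (Set.mem_iUnion.2 ⟨i, by simp⟩), by simp⟩
lemma adjD (i : Fin k) : (Gk k).Adj (Sum.inr (Sum.inl i)) (Sum.inl 5) := by
  rw [Gk, SimpleGraph.fromEdgeSet_adj]
  exact ⟨Or.inr (Set.mem_iUnion.2 ⟨i, by simp⟩), by simp⟩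

lemma adj'01 : (Gk' k).Adj (Sum.inl 0) (Sum.inl 1) := by
  simp [Gk', SimpleGraph.fromEdgeSet_adj]
lemma adj'02 : (Gk' k).Adj (Sum.inl 0) (Sum.inl 2) := by
  simp [Gk', SimpleGraph.fromEdgeSet_adj]
lemma adj'12 : (Gk' k).Adj (Sum.inl 1) (Sum.inl 2) := by
  simp [Gk', SimpleGraph.fromEdgeSet_adj]
lemma adj'34 : (Gk' k).Adj (Sum.inl 3) (Sum.inl 4) := by
  simp [Gk', SimpleGraph.fromEdgeSet_adj]
lemma adj'35 : (Gk' k).Adj (Sum.inl 3) (Sum.inl 5) := by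
  simp [Gk', SimpleGraph.fromEdgeSet_adj]
lemma adj'45 : (Gk' k).Adj (Sum.inl 4) (Sum.inl 5) := by
  simp [Gk', SimpleGraph.fromEdgeSet_adj]
lemma adj'A (i : Fin k) : (Gk' k).Adj (Sum.inl 2) (Sum.inr (Sum.inr i)) := by
  rw [Gk', SimpleGraph.fromEdgeSet_adj]
  exact ⟨Or.inr (Set.mem_iUnion.2 ⟨i, by simp⟩), by simp⟩
end adj

/-- Case analysis for edges of `Gk`. -/
lemma gk_edge_cases {u v : GkV k} (h : (Gk k).Adj u v) :
    edgeVec u v = edgeVec (Sum.inl 0) (Sum.inl 1) ∨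
    edgeVec u v = edgeVec (Sum.inl 0) (Sum.inl 2) ∨
    edgeVec u v = edgeVec (Sum.inl 1) (Sum.inl 2) ∨
    edgeVec u v = edgeVec (Sum.inl 3) (Sum.inl 4) ∨
    edgeVec u v = edgeVec (Sum.inl 3) (Sum.inl 5) ∨
    edgeVec u v = edgeVec (Sum.inl 4) (Sum.inl 5) ∨
    ∃ i : Fin k,
      edgeVec u v = edgeVec (Sum.inl 2) (Sum.inr (Sum.inr i)) ∨
      edgeVec u v = edgeVec (Sum.inr (Sum.inr i)) (Sum.inr (Sum.inl i)) ∨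
      edgeVec u v = edgeVec (Sum.inr (Sum.inl i)) (Sum.inl 2) ∨
      edgeVec u v = edgeVec (Sum.inr (Sum.inl i)) (Sum.inl 5) := by
  rw [Gk, SimpleGraph.fromEdgeSet_adj] at h
  obtain ⟨hmem, -⟩ := h
  rcases hmem with h6 | hU
  · simp only [Set.mem_insert_iff, Set.mem_singleton_iff, Sym2.eq_iff] at h6
    rcases h6 with (⟨rfl,rfl⟩|⟨rfl,rfl⟩)|(⟨rfl,rfl⟩|⟨rfl,rfl⟩)|(⟨rfl,rfl⟩|⟨rfl,rfl⟩)|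
      (⟨rfl,rfl⟩|⟨rfl,rfl⟩)|(⟨rfl,rfl⟩|⟨rfl,rfl⟩)|(⟨rfl,rfl⟩|⟨rfl,rfl⟩) <;>
      simp [edgeVec_comm]
  · rw [Set.mem_iUnion] at hU
    obtain ⟨i, hi⟩ := hU
    refine Or.inr (Or.inr (Or.inr (Or.inr (Or.inr (Or.inr ⟨i, ?_⟩)))))
    simp only [Set.mem_insert_iff, Set.mem_singleton_iff, Sym2.eq_iff] at hi
    rcases hi with (⟨rfl,rfl⟩|⟨rfl,rfl⟩)|(⟨rfl,rfl⟩|⟨rfl,rfl⟩)|(⟨rfl,rfl⟩|⟨rfl,rfl⟩)|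
      (⟨rfl,rfl⟩|⟨rfl,rfl⟩) <;> simp [edgeVec_comm]

lemma gk'_edge_cases {u v : GkV k} (h : (Gk' k).Adj u v) :
    edgeVec u v = edgeVec (Sum.inl 0) (Sum.inl 1) ∨
    edgeVec u v = edgeVec (Sum.inl 0) (Sum.inl 2) ∨
    edgeVec u v = edgeVec (Sum.inl 1) (Sum.inl 2) ∨
    edgeVec u v = edgeVec (Sum.inl 3) (Sum.inl 4) ∨
    edgeVec u v = edgeVec (Sum.inl 3) (Sum.inl 5) ∨
    edgeVec u v = edgeVec (Sum.inl 4) (Sum.inl 5) ∨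
    ∃ i : Fin k, edgeVec u v = edgeVec (Sum.inl 2) (Sum.inr (Sum.inr i)) := by
  rw [Gk', SimpleGraph.fromEdgeSet_adj] at h
  obtain ⟨hmem, -⟩ := h
  rcases hmem with h6 | hU
  · simp only [Set.mem_insert_iff, Set.mem_singleton_iff, Sym2.eq_iff] at h6
    rcases h6 with (⟨rfl,rfl⟩|⟨rfl,rfl⟩)|(⟨rfl,rfl⟩|⟨rfl,rfl⟩)|(⟨rfl,rfl⟩|⟨rfl,rfl⟩)|
      (⟨rfl,rfl⟩|⟨rfl,rfl⟩)|(⟨rfl,rfl⟩|⟨rfl,rfl⟩)|(⟨rfl,rfl⟩|⟨rfl,rfl⟩) <;>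
      simp [edgeVec_comm]
  · rw [Set.mem_iUnion] at hU
    obtain ⟨i, hi⟩ := hU
    refine Or.inr (Or.inr (Or.inr (Or.inr (Or.inr (Or.inr ⟨i, ?_⟩)))))
    simp only [Set.mem_singleton_iff, Sym2.eq_iff] at hi
    rcases hi with ⟨rfl,rfl⟩|⟨rfl,rfl⟩ <;> simp [edgeVec_comm]

/-- `Q' ≤ Q`. -/
lemma gk'_le_gk : edgeMonoid (Gk' k) ≤ edgeMonoid (Gk k) := by
  rw [edgeMonoid]
  apply AddSubmonoid.closure_le.2
  rintro x ⟨u, v, huv, rfl⟩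
  rcases gk'_edge_cases huv with h|h|h|h|h|h|⟨i,h⟩ <;> rw [h]
  · exact AddSubmonoid.subset_closure ⟨_, _, adj01, rfl⟩
  · exact AddSubmonoid.subset_closure ⟨_, _, adj02, rfl⟩
  · exact AddSubmonoid.subset_closure ⟨_, _, adj12, rfl⟩
  · exact AddSubmonoid.subset_closure ⟨_, _, adj34, rfl⟩
  · exact AddSubmonoid.subset_closure ⟨_, _, adj35, rfl⟩
  · exact AddSubmonoid.subset_closure ⟨_, _, adj45, rfl⟩
  · exact AddSubmonoid.subset_closure ⟨_, _, adjA i, rfl⟩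

lemma zsmul_mem_of_nonneg {M : AddSubmonoid (GkV k → ℤ)} {z : ℤ} (hz : 0 ≤ z)
    {m : GkV k → ℤ} (hm : m ∈ M) : z • m ∈ M := by
  lift z to ℕ using hz
  rw [natCast_zsmul]
  exact AddSubmonoid.nsmul_mem M hm _


section EvalLemmas

lemma edgeVec_sum (u v : GkV k) : ∑ w, edgeVec u v w = 2 := by
  rcases u with j|i|i <;> rcases v with j'|i'|i' <;>
    simp [edgeVec, Finset.sum_add_distrib, Finset.sum_ite_eq, Finset.sum_ite_eq']

lemma sB_uu (a b : Fin 6) : sB (k := k) (edgeVec (Sum.inl a) (Sum.inl b)) = 0 := by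
  simp [sB, edgeVec]
lemma sC_uu (a b : Fin 6) : sC (k := k) (edgeVec (Sum.inl a) (Sum.inl b)) = 0 := by
  simp [sC, edgeVec]
lemma sM_uu (a b : Fin 6) : sM (k := k) (edgeVec (Sum.inl a) (Sum.inl b)) = 0 := by
  simp [sM, edgeVec]

lemma sB_A (a : Fin 6) (i : Fin k) : sB (edgeVec (Sum.inl a) (Sum.inr (Sum.inr i))) = 0 := by
  simp [sB, edgeVec]
lemma sC_A (a : Fin 6) (i : Fin k) : sC (edgeVec (Sum.inl a) (Sum.inr (Sum.inr i))) = 1 := by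
  simp [sC, edgeVec]
lemma sM_A (a : Fin 6) (i : Fin k) : sM (edgeVec (Sum.inl a) (Sum.inr (Sum.inr i))) = 0 := by
  have h : ∀ x : Fin k, ((0:ℤ) ⊓ if x = i then 1 else 0) = 0 := fun x => by split <;> simp
  simp [sM, edgeVec, h]

lemma sB_B (i : Fin k) : sB (edgeVec (Sum.inr (Sum.inr i)) (Sum.inr (Sum.inl i))) = 1 := by
  simp [sB, edgeVec]
lemma sC_B (i : Fin k) : sC (edgeVec (Sum.inr (Sum.inr i)) (Sum.inr (Sum.inl i))) = 1 := by
  simp [sC, edgeVec]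
lemma sM_B (i : Fin k) : sM (edgeVec (Sum.inr (Sum.inr i)) (Sum.inr (Sum.inl i))) = 1 := by
  simp [sM, edgeVec]

lemma sB_C (a : Fin 6) (i : Fin k) : sB (edgeVec (Sum.inr (Sum.inl i)) (Sum.inl a)) = 1 := by
  simp [sB, edgeVec]
lemma sC_C (a : Fin 6) (i : Fin k) : sC (edgeVec (Sum.inr (Sum.inl i)) (Sum.inl a)) = 0 := by
  simp [sC, edgeVec]
lemma sM_C (a : Fin 6) (i : Fin k) : sM (edgeVec (Sum.inr (Sum.inl i)) (Sum.inl a)) = 0 := by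
  have h : ∀ x : Fin k, ((if x = i then (1:ℤ) else 0) ⊓ 0) = 0 := fun x => by split <;> simp
  simp [sM, edgeVec, h]

end EvalLemmas

/-- The key feasibility data carried by every element of `Q`. -/
def QW (x : GkV k → ℤ) : Prop :=
  ∃ d β : ℤ, 0 ≤ β ∧ β ≤ sM x ∧ 0 ≤ d ∧ d + β ≤ sB x ∧
    x (Sum.inl 5) - x (Sum.inl 3) - x (Sum.inl 4) ≤ d ∧
    d ≤ x (Sum.inl 5) - x (Sum.inl 3) + x (Sum.inl 4) ∧
    d ≤ x (Sum.inl 5) + x (Sum.inl 3) - x (Sum.inl 4) ∧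
    x (Sum.inl 0) - x (Sum.inl 1) - x (Sum.inl 2) + sC x + sB x ≤ 2*β + d ∧
    x (Sum.inl 1) - x (Sum.inl 0) - x (Sum.inl 2) + sC x + sB x ≤ 2*β + d ∧
    2*β + d ≤ x (Sum.inl 0) + x (Sum.inl 1) - x (Sum.inl 2) + sC x + sB x ∧
    2 ∣ (d + x (Sum.inl 5) + x (Sum.inl 3) + x (Sum.inl 4))

lemma q_nonneg {x : GkV k → ℤ} (hx : x ∈ edgeMonoid (Gk k)) : ∀ w, 0 ≤ x w := by
  induction hx using AddSubmonoid.closure_induction with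
  | mem y hy =>
    obtain ⟨u, v, -, rfl⟩ := hy
    intro w
    simp only [edgeVec]
    split <;> split <;> omega
  | zero => intro w; simp
  | add a b _ _ ha hb => intro w; simpa using add_nonneg (ha w) (hb w)

lemma q_even {x : GkV k → ℤ} (hx : x ∈ edgeMonoid (Gk k)) : 2 ∣ ∑ w, x w := by
  induction hx using AddSubmonoid.closure_induction with
  | mem y hy =>
    obtain ⟨u, v, -, rfl⟩ := hy
    rw [edgeVec_sum]
  | zero => simp
  | add a b _ _ ha hb => simpa [Finset.sum_add_distrib] using Dvd.dvd.add ha hb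

lemma q_QW {x : GkV k → ℤ} (hx : x ∈ edgeMonoid (Gk k)) : QW x := by
  induction hx using AddSubmonoid.closure_induction with
  | mem y hy =>
    obtain ⟨u, v, huv, rfl⟩ := hy
    rcases gk_edge_cases huv with h|h|h|h|h|h|⟨i,h⟩
    · rw [h]; exact ⟨0, 0, by simp [sB_uu, sC_uu, sM_uu, edgeVec] <;> omega⟩
    · rw [h]; exact ⟨0, 0, by simp [sB_uu, sC_uu, sM_uu, edgeVec] <;> omega⟩
    · rw [h]; exact ⟨0, 0, by simp [sB_uu, sC_uu, sM_uu, edgeVec] <;> omega⟩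
    · rw [h]; exact ⟨0, 0, by simp [sB_uu, sC_uu, sM_uu, edgeVec] <;> omega⟩
    · rw [h]; exact ⟨0, 0, by simp [sB_uu, sC_uu, sM_uu, edgeVec] <;> omega⟩
    · rw [h]; exact ⟨0, 0, by simp [sB_uu, sC_uu, sM_uu, edgeVec] <;> omega⟩
    · rcases h with h|h|h|h
      · rw [h]; exact ⟨0, 0, by simp [sB_A, sC_A, sM_A, edgeVec] <;> omega⟩
      · rw [h]; exact ⟨0, 1, by simp [sB_B, sC_B, sM_B, edgeVec] <;> omega⟩
      · rw [h]; exact ⟨0, 0, by simp [sB_C, sC_C, sM_C, edgeVec] <;> omega⟩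
      · rw [h]; exact ⟨1, 0, by simp [sB_C, sC_C, sM_C, edgeVec] <;> omega⟩
  | zero => exact ⟨0, 0, by simp [sB, sC, sM] <;> omega⟩
  | add a b _ _ ha hb =>
    obtain ⟨d1, β1, h1⟩ := ha
    obtain ⟨d2, β2, h2⟩ := hb
    have hM := sM_superadd a b
    refine ⟨d1 + d2, β1 + β2, ?_⟩
    simp only [Pi.add_apply, sB_add, sC_add]
    omega

lemma q'_nonneg {x : GkV k → ℤ} (hx : x ∈ edgeMonoid (Gk' k)) : ∀ w, 0 ≤ x w :=
  q_nonneg (gk'_le_gk hx)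

lemma q'_bzero {x : GkV k → ℤ} (hx : x ∈ edgeMonoid (Gk' k)) :
    ∀ i : Fin k, x (Sum.inr (Sum.inl i)) = 0 := by
  induction hx using AddSubmonoid.closure_induction with
  | mem y hy =>
    obtain ⟨u, v, huv, rfl⟩ := hy
    rcases gk'_edge_cases huv with h|h|h|h|h|h|⟨i,h⟩ <;> rw [h] <;> intro j <;>
      simp [edgeVec]
  | zero => intro j; simp
  | add a b _ _ ha hb => intro j; simp [ha j, hb j]

lemma q'_odd_part {x : GkV k → ℤ} (hx : x ∈ edgeMonoid (Gk' k)) :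
    2 ∣ (x (Sum.inl 3) + x (Sum.inl 4) + x (Sum.inl 5)) := by
  induction hx using AddSubmonoid.closure_induction with
  | mem y hy =>
    obtain ⟨u, v, huv, rfl⟩ := hy
    rcases gk'_edge_cases huv with h|h|h|h|h|h|⟨i,h⟩ <;> rw [h] <;>
      simp [edgeVec] <;> omega
  | zero => simp
  | add a b _ _ ha hb => simp only [Pi.add_apply]; omega

section LoHi

lemma mul_max' (c a b : ℤ) (hc : 0 ≤ c) : c * max a b = max (c*a) (c*b) := by
  rcases le_total a b with h | h
  · rw [max_eq_right h, max_eq_right (mul_le_mul_of_nonneg_left h hc)]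
  · rw [max_eq_left h, max_eq_left (mul_le_mul_of_nonneg_left h hc)]

lemma mul_min' (c a b : ℤ) (hc : 0 ≤ c) : c * min a b = min (c*a) (c*b) := by
  rcases le_total a b with h | h
  · rw [min_eq_left h, min_eq_left (mul_le_mul_of_nonneg_left h hc)]
  · rw [min_eq_right h, min_eq_right (mul_le_mul_of_nonneg_left h hc)]

/-- lower bound for the feasibility interval -/
def loF (x : GkV k → ℤ) : ℤ :=
  max 0 (max (x (Sum.inl 5) - x (Sum.inl 3) - x (Sum.inl 4))
    (max (x (Sum.inl 0) - x (Sum.inl 1) - x (Sum.inl 2) + sC x + sB x - 2 * sM x)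
         (x (Sum.inl 1) - x (Sum.inl 0) - x (Sum.inl 2) + sC x + sB x - 2 * sM x)))

/-- upper bound for the feasibility interval -/
def hiF (x : GkV k → ℤ) : ℤ :=
  min (x (Sum.inl 5) - x (Sum.inl 3) + x (Sum.inl 4))
    (min (x (Sum.inl 5) + x (Sum.inl 3) - x (Sum.inl 4))
      (min (sB x)
        (min (x (Sum.inl 0) + x (Sum.inl 1) - x (Sum.inl 2) + sC x + sB x)
          (min (sB x - x (Sum.inl 0) + x (Sum.inl 1) + x (Sum.inl 2) - sC x)
               (sB x - x (Sum.inl 1) + x (Sum.inl 0) + x (Sum.inl 2) - sC x)))))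

lemma loF_smul (n : ℕ) (x : GkV k → ℤ) : loF (n • x) = n * loF x := by
  have hc : (0:ℤ) ≤ (n:ℤ) := Int.natCast_nonneg n
  rw [loF, loF, sB_smul, sC_smul, sM_smul,
    mul_max' _ _ _ hc, mul_max' _ _ _ hc, mul_max' _ _ _ hc, mul_zero]
  simp only [Pi.smul_apply, nsmul_eq_mul]
  ring_nf

lemma hiF_smul (n : ℕ) (x : GkV k → ℤ) : hiF (n • x) = n * hiF x := by
  have hc : (0:ℤ) ≤ (n:ℤ) := Int.natCast_nonneg n
  rw [hiF, hiF, sB_smul, sC_smul, mul_min' _ _ _ hc, mul_min' _ _ _ hc, mul_min' _ _ _ hc,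
    mul_min' _ _ _ hc, mul_min' _ _ _ hc]
  simp only [Pi.smul_apply, nsmul_eq_mul]
  ring_nf

lemma qw_loF_le_hiF {x : GkV k → ℤ} (hx : QW x) : loF x ≤ hiF x := by
  obtain ⟨d, β, h1, h2, h3, h4, h5, h6, h7, h8, h9, h10, h11⟩ := hx
  simp only [loF, hiF, max_le_iff, le_min_iff]
  omega

lemma sat_conds {x : GkV k → ℤ} (hx : x ∈ saturation (edgeMonoid (Gk k))) :
    (∀ w, 0 ≤ x w) ∧ (2 ∣ ∑ w, x w) ∧ loF x ≤ hiF x := by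
  obtain ⟨hgrp, n, hn, hnx⟩ := hx
  have hn' : (0:ℤ) < (n:ℤ) := by exact_mod_cast hn
  refine ⟨?_, ?_, ?_⟩
  · intro w
    have h := q_nonneg hnx w
    simp only [Pi.smul_apply, nsmul_eq_mul] at h
    nlinarith
  · -- evenness from the group closure
    clear hnx
    induction hgrp using AddSubgroup.closure_induction with
    | mem y hy => exact q_even hy
    | zero => simp
    | add a b _ _ ha hb => simp only [Pi.add_apply, Finset.sum_add_distrib]; omega
    | neg a _ ha =>
      simp only [Pi.neg_apply, Finset.sum_neg_distrib]
      omega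
  · have key := qw_loF_le_hiF (q_QW hnx)
    rw [loF_smul, hiF_smul] at key
    exact le_of_mul_le_mul_left key hn'

end LoHi

section Construct

lemma total_eq (x : GkV k → ℤ) : ∑ w, x w =
    x (Sum.inl 0) + x (Sum.inl 1) + x (Sum.inl 2) + x (Sum.inl 3) + x (Sum.inl 4) +
      x (Sum.inl 5) + sB x + sC x := by
  simp only [Fintype.sum_sum_type, Fin.sum_univ_six, sB, sC]
  ring

lemma gen_mem {u v : GkV k} (h : (Gk k).Adj u v) : edgeVec u v ∈ edgeMonoid (Gk k) :=
  AddSubmonoid.subset_closure ⟨u, v, h, rfl⟩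
lemma gen_mem' {u v : GkV k} (h : (Gk' k).Adj u v) : edgeVec u v ∈ edgeMonoid (Gk' k) :=
  AddSubmonoid.subset_closure ⟨u, v, h, rfl⟩

-- evaluation of indexed sums of path edges
lemma sumA_u (t : Fin k → ℤ) (j : Fin 6) :
    (∑ i, t i • edgeVec (Sum.inl 2) (Sum.inr (Sum.inr i)) : GkV k → ℤ) (Sum.inl j)
      = if j = 2 then ∑ i, t i else 0 := by
  simp [edgeVec, Finset.sum_apply, mul_ite]
lemma sumA_v (t : Fin k → ℤ) (i0 : Fin k) :
    (∑ i, t i • edgeVec (Sum.inl 2) (Sum.inr (Sum.inr i)) : GkV k → ℤ) (Sum.inr (Sum.inl i0)) = 0 := by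
  simp [edgeVec, Finset.sum_apply, mul_ite]
lemma sumA_w (t : Fin k → ℤ) (i0 : Fin k) :
    (∑ i, t i • edgeVec (Sum.inl 2) (Sum.inr (Sum.inr i)) : GkV k → ℤ) (Sum.inr (Sum.inr i0)) = t i0 := by
  simp [edgeVec, Finset.sum_apply, mul_ite, Finset.sum_ite_eq, Finset.sum_ite_eq']

lemma sumB_u (t : Fin k → ℤ) (j : Fin 6) :
    (∑ i, t i • edgeVec (Sum.inr (Sum.inr i)) (Sum.inr (Sum.inl i)) : GkV k → ℤ) (Sum.inl j) = 0 := by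
  simp [edgeVec, Finset.sum_apply, mul_ite]
lemma sumB_v (t : Fin k → ℤ) (i0 : Fin k) :
    (∑ i, t i • edgeVec (Sum.inr (Sum.inr i)) (Sum.inr (Sum.inl i)) : GkV k → ℤ) (Sum.inr (Sum.inl i0))
      = t i0 := by
  simp [edgeVec, Finset.sum_apply, mul_ite, Finset.sum_ite_eq, Finset.sum_ite_eq']
lemma sumB_w (t : Fin k → ℤ) (i0 : Fin k) :
    (∑ i, t i • edgeVec (Sum.inr (Sum.inr i)) (Sum.inr (Sum.inl i)) : GkV k → ℤ) (Sum.inr (Sum.inr i0))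
      = t i0 := by
  simp [edgeVec, Finset.sum_apply, mul_ite, Finset.sum_ite_eq, Finset.sum_ite_eq']

lemma sumC_u (t : Fin k → ℤ) (j : Fin 6) :
    (∑ i, t i • edgeVec (Sum.inr (Sum.inl i)) (Sum.inl 2) : GkV k → ℤ) (Sum.inl j)
      = if j = 2 then ∑ i, t i else 0 := by
  simp [edgeVec, Finset.sum_apply, mul_ite]
lemma sumC_v (t : Fin k → ℤ) (i0 : Fin k) :
    (∑ i, t i • edgeVec (Sum.inr (Sum.inl i)) (Sum.inl 2) : GkV k → ℤ) (Sum.inr (Sum.inl i0)) = t i0 := by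
  simp [edgeVec, Finset.sum_apply, mul_ite, Finset.sum_ite_eq, Finset.sum_ite_eq']
lemma sumC_w (t : Fin k → ℤ) (i0 : Fin k) :
    (∑ i, t i • edgeVec (Sum.inr (Sum.inl i)) (Sum.inl 2) : GkV k → ℤ) (Sum.inr (Sum.inr i0)) = 0 := by
  simp [edgeVec, Finset.sum_apply, mul_ite]

lemma sumD_u (t : Fin k → ℤ) (j : Fin 6) :
    (∑ i, t i • edgeVec (Sum.inr (Sum.inl i)) (Sum.inl 5) : GkV k → ℤ) (Sum.inl j)
      = if j = 5 then ∑ i, t i else 0 := by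
  simp [edgeVec, Finset.sum_apply, mul_ite]
lemma sumD_v (t : Fin k → ℤ) (i0 : Fin k) :
    (∑ i, t i • edgeVec (Sum.inr (Sum.inl i)) (Sum.inl 5) : GkV k → ℤ) (Sum.inr (Sum.inl i0)) = t i0 := by
  simp [edgeVec, Finset.sum_apply, mul_ite, Finset.sum_ite_eq, Finset.sum_ite_eq']
lemma sumD_w (t : Fin k → ℤ) (i0 : Fin k) :
    (∑ i, t i • edgeVec (Sum.inr (Sum.inl i)) (Sum.inl 5) : GkV k → ℤ) (Sum.inr (Sum.inr i0)) = 0 := by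
  simp [edgeVec, Finset.sum_apply, mul_ite]

lemma mem_Q_of_d {x : GkV k → ℤ} (hpos : ∀ w, 0 ≤ x w) (heven : 2 ∣ ∑ w, x w)
    {d : ℤ} (hlo : loF x ≤ d) (hhi : d ≤ hiF x)
    (hpar : 2 ∣ (d + x (Sum.inl 5) + x (Sum.inl 3) + x (Sum.inl 4))) :
    x ∈ edgeMonoid (Gk k) := by
  rw [total_eq] at heven
  simp only [loF, max_le_iff] at hlo
  obtain ⟨hd0, hA, hB1, hB2⟩ := hlo
  simp only [hiF, le_min_iff] at hhi
  obtain ⟨h1, h2, h3, h4, h5a, h5b⟩ := hhi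
  have p0 := hpos (Sum.inl 0); have p1 := hpos (Sum.inl 1); have p2 := hpos (Sum.inl 2)
  have p3 := hpos (Sum.inl 3); have p4 := hpos (Sum.inl 4); have p5 := hpos (Sum.inl 5)
  obtain ⟨c1, hc1⟩ : 2 ∣ (x (Sum.inl 0) - x (Sum.inl 1) - x (Sum.inl 2) + sC x + sB x - d) := by
    omega
  have hMnn : 0 ≤ sM x := Finset.sum_nonneg (fun i _ => le_min (hpos _) (hpos _))
  set β : ℤ := max 0 (max c1 (c1 - (x (Sum.inl 0) - x (Sum.inl 1)))) with hβdef
  have trich : β = 0 ∨ β = c1 ∨ β = c1 - (x (Sum.inl 0) - x (Sum.inl 1)) := by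
    rcases max_choice (0:ℤ) (max c1 (c1 - (x (Sum.inl 0) - x (Sum.inl 1)))) with h | h
    · exact Or.inl (hβdef.trans h)
    · rcases max_choice c1 (c1 - (x (Sum.inl 0) - x (Sum.inl 1))) with h' | h'
      · exact Or.inr (Or.inl ((hβdef.trans h).trans h'))
      · exact Or.inr (Or.inr ((hβdef.trans h).trans h'))
  have hβ0 : 0 ≤ β := le_max_left _ _
  have hβc1 : c1 ≤ β := le_trans (le_max_left _ _) (le_max_right _ _)
  have hβc2 : c1 - (x (Sum.inl 0) - x (Sum.inl 1)) ≤ β :=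
    le_trans (le_max_right _ _) (le_max_right _ _)
  have hβM : β ≤ sM x := by rcases trich with h|h|h <;> omega
  have hdβSb : d + β ≤ sB x := by rcases trich with h|h|h <;> omega
  -- distribute β among the paths
  obtain ⟨f, hf, hfsum⟩ := distribute k
    (fun i => min (x (Sum.inr (Sum.inl i))) (x (Sum.inr (Sum.inr i)))) β
    (fun i => le_min (hpos _) (hpos _)) hβ0 (by exact hβM)
  have hfb : ∀ i, f i ≤ x (Sum.inr (Sum.inl i)) :=
    fun i => le_trans (hf i).2 (min_le_left _ _)
  have hfc : ∀ i, f i ≤ x (Sum.inr (Sum.inr i)) :=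
    fun i => le_trans (hf i).2 (min_le_right _ _)
  -- distribute d among the paths
  obtain ⟨g, hg, hgsum⟩ := distribute k
    (fun i => x (Sum.inr (Sum.inl i)) - f i) d
    (fun i => by have := hfb i; show (0:ℤ) ≤ x (Sum.inr (Sum.inl i)) - f i; omega) hd0
    (by rw [Finset.sum_sub_distrib, hfsum]; show d ≤ sB x - β; omega)
  -- even halving witnesses for the triangle coefficients
  obtain ⟨m12, hm12⟩ : 2 ∣ (x (Sum.inl 0) + x (Sum.inl 1) - x (Sum.inl 2) + sC x + sB x
      - 2*β - d) := by omega
  obtain ⟨m13, hm13⟩ : 2 ∣ (x (Sum.inl 0) - x (Sum.inl 1) + x (Sum.inl 2) - sC x - sB x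
      + 2*β + d) := by omega
  obtain ⟨m23, hm23⟩ : 2 ∣ (x (Sum.inl 1) - x (Sum.inl 0) + x (Sum.inl 2) - sC x - sB x
      + 2*β + d) := by omega
  obtain ⟨m45, hm45⟩ : 2 ∣ (x (Sum.inl 3) + x (Sum.inl 4) - x (Sum.inl 5) + d) := by omega
  obtain ⟨m46, hm46⟩ : 2 ∣ (x (Sum.inl 3) - x (Sum.inl 4) + x (Sum.inl 5) - d) := by omega
  obtain ⟨m56, hm56⟩ : 2 ∣ (x (Sum.inl 4) - x (Sum.inl 3) + x (Sum.inl 5) - d) := by omega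
  have hm12nn : 0 ≤ m12 := by rcases trich with h|h|h <;> omega
  have hm13nn : 0 ≤ m13 := by omega
  have hm23nn : 0 ≤ m23 := by omega
  have hm45nn : 0 ≤ m45 := by omega
  have hm46nn : 0 ≤ m46 := by omega
  have hm56nn : 0 ≤ m56 := by omega
  have hsumA : ∑ i, (x (Sum.inr (Sum.inr i)) - f i) = sC x - β := by
    rw [Finset.sum_sub_distrib, hfsum]; rfl
  have hsumC : ∑ i, (x (Sum.inr (Sum.inl i)) - f i - g i) = sB x - β - d := by
    simp only [Finset.sum_sub_distrib, hfsum, hgsum]; rfl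
  have hxeq : x =
      m12 • edgeVec (Sum.inl 0) (Sum.inl 1) + m13 • edgeVec (Sum.inl 0) (Sum.inl 2) +
      m23 • edgeVec (Sum.inl 1) (Sum.inl 2) + m45 • edgeVec (Sum.inl 3) (Sum.inl 4) +
      m46 • edgeVec (Sum.inl 3) (Sum.inl 5) + m56 • edgeVec (Sum.inl 4) (Sum.inl 5) +
      (∑ i, (x (Sum.inr (Sum.inr i)) - f i) • edgeVec (Sum.inl 2) (Sum.inr (Sum.inr i))) +
      (∑ i, f i • edgeVec (Sum.inr (Sum.inr i)) (Sum.inr (Sum.inl i))) +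
      (∑ i, (x (Sum.inr (Sum.inl i)) - f i - g i) • edgeVec (Sum.inr (Sum.inl i)) (Sum.inl 2)) +
      (∑ i, g i • edgeVec (Sum.inr (Sum.inl i)) (Sum.inl 5)) := by
    funext w
    rcases w with j | i0 | i0
    · simp only [Pi.add_apply, Pi.smul_apply, smul_eq_mul, sumA_u, sumB_u, sumC_u, sumD_u,
        hsumA, hsumC]
      fin_cases j <;> simp [edgeVec] <;> omega
    · simp only [Pi.add_apply, Pi.smul_apply, smul_eq_mul, sumA_v, sumB_v, sumC_v, sumD_v]
      simp [edgeVec]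
      omega
    · simp only [Pi.add_apply, Pi.smul_apply, smul_eq_mul, sumA_w, sumB_w, sumC_w, sumD_w]
      simp [edgeVec]
  rw [hxeq]
  refine AddSubmonoid.add_mem _ (AddSubmonoid.add_mem _ (AddSubmonoid.add_mem _
    (AddSubmonoid.add_mem _ (AddSubmonoid.add_mem _ (AddSubmonoid.add_mem _
    (AddSubmonoid.add_mem _ (AddSubmonoid.add_mem _ (AddSubmonoid.add_mem _
      (zsmul_mem_of_nonneg hm12nn (gen_mem adj01))
      (zsmul_mem_of_nonneg hm13nn (gen_mem adj02)))
      (zsmul_mem_of_nonneg hm23nn (gen_mem adj12)))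
      (zsmul_mem_of_nonneg hm45nn (gen_mem adj34)))
      (zsmul_mem_of_nonneg hm46nn (gen_mem adj35)))
      (zsmul_mem_of_nonneg hm56nn (gen_mem adj45)))
      (AddSubmonoid.sum_mem _ (fun i _ =>
        zsmul_mem_of_nonneg (by have := hfc i; omega) (gen_mem (adjA i)))))
      (AddSubmonoid.sum_mem _ (fun i _ =>
        zsmul_mem_of_nonneg (hf i).1 (gen_mem (adjB i)))))
      (AddSubmonoid.sum_mem _ (fun i _ =>
        zsmul_mem_of_nonneg (by have := (hg i).2; omega) (gen_mem (adjC i)))))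
      (AddSubmonoid.sum_mem _ (fun i _ =>
        zsmul_mem_of_nonneg (hg i).1 (gen_mem (adjD i))))

end Construct

section Hole

lemma hole_mem {x : GkV k → ℤ} (hpos : ∀ w, 0 ≤ x w) (heven : 2 ∣ ∑ w, x w)
    (hb : ∀ i, x (Sum.inr (Sum.inl i)) = 0)
    (h1 : x (Sum.inl 5) - x (Sum.inl 3) - x (Sum.inl 4) ≤ -1)
    (h2 : 1 ≤ x (Sum.inl 5) - x (Sum.inl 3) + x (Sum.inl 4))
    (h3 : 1 ≤ x (Sum.inl 5) + x (Sum.inl 3) - x (Sum.inl 4))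
    (h4 : x (Sum.inl 0) - x (Sum.inl 1) - x (Sum.inl 2) + sC x ≤ -1)
    (h5 : x (Sum.inl 1) - x (Sum.inl 0) - x (Sum.inl 2) + sC x ≤ -1)
    (h6 : 1 ≤ x (Sum.inl 0) + x (Sum.inl 1) - x (Sum.inl 2) + sC x)
    (hodd : ¬ 2 ∣ (x (Sum.inl 5) + x (Sum.inl 3) + x (Sum.inl 4))) :
    ∃ y ∈ edgeMonoid (Gk' k), x = qHole k + y := by
  rw [total_eq] at heven
  have hSb : sB x = 0 := by simp [sB, hb]
  obtain ⟨m12, hm12⟩ : 2 ∣ (x (Sum.inl 0) + x (Sum.inl 1) - x (Sum.inl 2) + sC x - 1) := by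
    omega
  obtain ⟨m13, hm13⟩ : 2 ∣ (x (Sum.inl 0) - x (Sum.inl 1) + x (Sum.inl 2) - sC x - 1) := by
    omega
  obtain ⟨m23, hm23⟩ : 2 ∣ (x (Sum.inl 1) - x (Sum.inl 0) + x (Sum.inl 2) - sC x - 1) := by
    omega
  obtain ⟨m45, hm45⟩ : 2 ∣ (x (Sum.inl 3) + x (Sum.inl 4) - x (Sum.inl 5) - 1) := by omega
  obtain ⟨m46, hm46⟩ : 2 ∣ (x (Sum.inl 3) - x (Sum.inl 4) + x (Sum.inl 5) - 1) := by omega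
  obtain ⟨m56, hm56⟩ : 2 ∣ (x (Sum.inl 4) - x (Sum.inl 3) + x (Sum.inl 5) - 1) := by omega
  refine ⟨m12 • edgeVec (Sum.inl 0) (Sum.inl 1) + m13 • edgeVec (Sum.inl 0) (Sum.inl 2) +
      m23 • edgeVec (Sum.inl 1) (Sum.inl 2) + m45 • edgeVec (Sum.inl 3) (Sum.inl 4) +
      m46 • edgeVec (Sum.inl 3) (Sum.inl 5) + m56 • edgeVec (Sum.inl 4) (Sum.inl 5) +
      (∑ i, x (Sum.inr (Sum.inr i)) • edgeVec (Sum.inl 2) (Sum.inr (Sum.inr i))), ?_, ?_⟩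
  · refine AddSubmonoid.add_mem _ (AddSubmonoid.add_mem _ (AddSubmonoid.add_mem _
      (AddSubmonoid.add_mem _ (AddSubmonoid.add_mem _ (AddSubmonoid.add_mem _
        (zsmul_mem_of_nonneg (by omega) (gen_mem' adj'01))
        (zsmul_mem_of_nonneg (by omega) (gen_mem' adj'02)))
        (zsmul_mem_of_nonneg (by omega) (gen_mem' adj'12)))
        (zsmul_mem_of_nonneg (by omega) (gen_mem' adj'34)))
        (zsmul_mem_of_nonneg (by omega) (gen_mem' adj'35)))
        (zsmul_mem_of_nonneg (by omega) (gen_mem' adj'45)))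
      (AddSubmonoid.sum_mem _ (fun i _ =>
        zsmul_mem_of_nonneg (hpos _) (gen_mem' (adj'A i))))
  · have hsC : ∑ i, x (Sum.inr (Sum.inr i)) = sC x := rfl
    funext w
    rcases w with j | i0 | i0
    · simp only [Pi.add_apply, Pi.smul_apply, smul_eq_mul, sumA_u, hsC, qHole, Sum.elim_inl]
      fin_cases j <;> simp [edgeVec] <;> omega
    · simp only [Pi.add_apply, Pi.smul_apply, smul_eq_mul, sumA_v, qHole, Sum.elim_inr]
      simp [edgeVec, hb i0]
    · simp only [Pi.add_apply, Pi.smul_apply, smul_eq_mul, sumA_w, qHole, Sum.elim_inr]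
      simp [edgeVec]

set_option maxHeartbeats 1000000 in
lemma decomp {x : GkV k → ℤ} (hpos : ∀ w, 0 ≤ x w) (heven : 2 ∣ ∑ w, x w)
    (hlh : loF x ≤ hiF x) :
    x ∈ edgeMonoid (Gk k) ∨ ∃ y ∈ edgeMonoid (Gk' k), x = qHole k + y := by
  by_cases hp : 2 ∣ (loF x + x (Sum.inl 5) + x (Sum.inl 3) + x (Sum.inl 4))
  · exact Or.inl (mem_Q_of_d hpos heven le_rfl hlh hp)
  · by_cases hl : loF x + 1 ≤ hiF x
    · exact Or.inl (mem_Q_of_d hpos heven (by omega) hl (by omega))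
    · right
      have heven' := heven
      rw [total_eq] at heven'
      have hMnn : 0 ≤ sM x := Finset.sum_nonneg (fun i _ => le_min (hpos _) (hpos _))
      have hSbnn : 0 ≤ sB x := Finset.sum_nonneg (fun i _ => hpos _)
      have p0 := hpos (Sum.inl 0); have p1 := hpos (Sum.inl 1); have p2 := hpos (Sum.inl 2)
      have p3 := hpos (Sum.inl 3); have p4 := hpos (Sum.inl 4); have p5 := hpos (Sum.inl 5)
      have hSb0 : sB x = 0 := by simp only [loF, hiF] at hp hlh hl ⊢; omega
      have hb : ∀ i, x (Sum.inr (Sum.inl i)) = 0 := by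
        intro i
        have hle : x (Sum.inr (Sum.inl i)) ≤ sB x :=
          Finset.single_le_sum (fun j (_ : j ∈ Finset.univ) => hpos (Sum.inr (Sum.inl j)))
            (Finset.mem_univ i)
        have := hpos (Sum.inr (Sum.inl i)); omega
      have hsM0 : sM x = 0 := by
        rw [sM]
        apply Finset.sum_eq_zero
        intro i _
        rw [hb i]
        exact min_eq_left (hpos _)
      obtain ⟨k1, k2, k3, k4, k5, k6, k7⟩ :
          (x (Sum.inl 5) - x (Sum.inl 3) - x (Sum.inl 4) ≤ -1) ∧
          (1 ≤ x (Sum.inl 5) - x (Sum.inl 3) + x (Sum.inl 4)) ∧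
          (1 ≤ x (Sum.inl 5) + x (Sum.inl 3) - x (Sum.inl 4)) ∧
          (x (Sum.inl 0) - x (Sum.inl 1) - x (Sum.inl 2) + sC x ≤ -1) ∧
          (x (Sum.inl 1) - x (Sum.inl 0) - x (Sum.inl 2) + sC x ≤ -1) ∧
          (1 ≤ x (Sum.inl 0) + x (Sum.inl 1) - x (Sum.inl 2) + sC x) ∧
          ¬ 2 ∣ (x (Sum.inl 5) + x (Sum.inl 3) + x (Sum.inl 4)) := by
        simp only [loF, hiF, hSb0, hsM0] at hp hlh hl
        omega
      exact hole_mem hpos heven hb k1 k2 k3 k4 k5 k6 k7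

end Hole

section Backward

lemma sB_qHole : sB (qHole k) = 0 := by simp [sB, qHole]

lemma two_q_mem : (2 : ℕ) • qHole k ∈ edgeMonoid (Gk k) := by
  have h : (2 : ℕ) • qHole k =
      edgeVec (Sum.inl 0) (Sum.inl 1) + edgeVec (Sum.inl 0) (Sum.inl 2) +
      edgeVec (Sum.inl 1) (Sum.inl 2) + edgeVec (Sum.inl 3) (Sum.inl 4) +
      edgeVec (Sum.inl 3) (Sum.inl 5) + edgeVec (Sum.inl 4) (Sum.inl 5) := by
    funext w
    rcases w with j | i0 | i0
    · fin_cases j <;> simp [qHole, edgeVec]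
    · simp [qHole, edgeVec]
    · simp [qHole, edgeVec]
  rw [h]
  exact AddSubmonoid.add_mem _ (AddSubmonoid.add_mem _ (AddSubmonoid.add_mem _
    (AddSubmonoid.add_mem _ (AddSubmonoid.add_mem _ (gen_mem adj01) (gen_mem adj02))
    (gen_mem adj12)) (gen_mem adj34)) (gen_mem adj35)) (gen_mem adj45)

lemma q_in_group (hk : 0 < k) :
    qHole k ∈ AddSubgroup.closure ((edgeMonoid (Gk k) : AddSubmonoid (GkV k → ℤ)) :
      Set (GkV k → ℤ)) := by
  set i0 : Fin k := ⟨0, hk⟩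
  have h : qHole k =
      edgeVec (Sum.inl 0) (Sum.inl 1) + edgeVec (Sum.inl 3) (Sum.inl 4) +
      edgeVec (Sum.inr (Sum.inl i0)) (Sum.inl 5) + edgeVec (Sum.inl 2) (Sum.inr (Sum.inr i0)) -
      edgeVec (Sum.inr (Sum.inr i0)) (Sum.inr (Sum.inl i0)) := by
    funext w
    rcases w with j | i1 | i1
    · fin_cases j <;> simp [qHole, edgeVec]
    · by_cases hii : i1 = i0 <;> simp [qHole, edgeVec, hii]
    · by_cases hii : i1 = i0 <;> simp [qHole, edgeVec, hii]
  rw [h]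
  have mem : ∀ {u v : GkV k}, (Gk k).Adj u v →
      edgeVec u v ∈ AddSubgroup.closure ((edgeMonoid (Gk k) : AddSubmonoid (GkV k → ℤ)) :
        Set (GkV k → ℤ)) :=
    fun h => AddSubgroup.subset_closure (gen_mem h)
  exact AddSubgroup.sub_mem _ (AddSubgroup.add_mem _ (AddSubgroup.add_mem _
    (AddSubgroup.add_mem _ (mem adj01) (mem adj34)) (mem (adjD i0))) (mem (adjA i0)))
    (mem (adjB i0))

lemma hole_not_in_Q {y : GkV k → ℤ} (hy : y ∈ edgeMonoid (Gk' k)) :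
    qHole k + y ∉ edgeMonoid (Gk k) := by
  intro hmem
  obtain ⟨d, β, h1, h2, h3, h4, h5, h6, h7, h8, h9, h10, h11⟩ := q_QW hmem
  have hbz := q'_bzero hy
  have hodd := q'_odd_part hy
  have hSb : sB (qHole k + y) = 0 := by
    rw [sB]
    apply Finset.sum_eq_zero
    intro i _
    simp [qHole, hbz i]
  have e3 : (qHole k + y) (Sum.inl 3) = 1 + y (Sum.inl 3) := by simp [qHole]
  have e4 : (qHole k + y) (Sum.inl 4) = 1 + y (Sum.inl 4) := by simp [qHole]
  have e5 : (qHole k + y) (Sum.inl 5) = 1 + y (Sum.inl 5) := by simp [qHole]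
  rw [hSb] at h4
  rw [e3, e4, e5] at h11
  omega

end Backward

end Aux

/-- **Theorem.** For `Q = Q_{G_k}` with normalization `Q̄` and `q = e_{u₁}+⋯+e_{u₆}`,
the set of holes satisfies `Q̄ ∖ Q = q + Q'`, where `Q' = Q_{G'}` is the edge monoid of the
graph obtained from `G_k` by deleting `v₁,…,v_k` and all incident edges. -/
theorem gk_holes_eq (k : ℕ) (hk : 0 < k) :
    (saturation (edgeMonoid (Gk k)) : Set (GkV k → ℤ)) \ (edgeMonoid (Gk k) : Set (GkV k → ℤ))
      = (fun x => qHole k + x) '' (edgeMonoid (Gk' k) : Set (GkV k → ℤ)) := by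
  ext x
  constructor
  · rintro ⟨hsat, hnot⟩
    obtain ⟨hpos, heven, hlh⟩ := sat_conds hsat
    rcases decomp hpos heven hlh with h | ⟨y, hy, rfl⟩
    · exact absurd h hnot
    · exact ⟨y, hy, rfl⟩
  · rintro ⟨y, hy, rfl⟩
    refine ⟨⟨AddSubgroup.add_mem _ (q_in_group hk)
        (AddSubgroup.subset_closure (gk'_le_gk hy)), 2, two_pos, ?_⟩, hole_not_in_Q hy⟩
    rw [smul_add]
    exact AddSubmonoid.add_mem _ two_q_mem (AddSubmonoid.nsmul_mem _ (gk'_le_gk hy) 2)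

end MonoidHilbert
end
end

section
/- For the monoid R_m generated by (0,2m+3),(m+1,m+2),(m+2,m+1),(2m+3,0) in Z_{≥0}², the h-polynomial of k[R_m] is h_{R_m}(t) = 1 + 2t + 2t² + ⋯ + 2t^{m+1}. Consequently deg(h_{R_m}(t)) − deg(h_{R̄_m}(t)) = m, so the degree of the h-polynomial of a monoid algebra can exceed that of its normalization by an arbitrary amount. -/
open scoped Classical

noncomputable section

namespace MonoidHilbert

/-- The monoid `R_m ⊂ ℤ²` generated by `(0,2m+3), (m+1,m+2), (m+2,m+1), (2m+3,0)`. -/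
def Rm (m : ℕ) : AddSubmonoid (Fin 2 → ℤ) :=
  AddSubmonoid.closure
    {![(0 : ℤ), 2 * m + 3], ![(m : ℤ) + 1, m + 2], ![(m : ℤ) + 2, m + 1], ![(2 : ℤ) * m + 3, 0]}

/-- The Hilbert series of `S ⊆ ℤ²` in the grading where `(x,y)` has degree `(x+y)/(2m+3)`. -/
def rmHilbSeries (m : ℕ) (S : Set (Fin 2 → ℤ)) : PowerSeries ℤ :=
  PowerSeries.mk fun n =>
    (Nat.card {x : Fin 2 → ℤ // x ∈ S ∧ x 0 + x 1 = (2 * m + 3 : ℤ) * n} : ℤ)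

/-- Membership in the support of `C r` forces the zero exponent. -/
private lemma c_support (k : Type) [Field k] (r : k) {d : Fin 2 →₀ ℕ}
    (hd : d ∈ (MvPolynomial.C (σ := Fin 2) r).support) : d = 0 := by
  by_contra h
  have : MvPolynomial.coeff d (MvPolynomial.C (σ := Fin 2) r) = 0 := by
    rw [MvPolynomial.coeff_C]
    exact if_neg fun h0 => h h0.symm
  exact (MvPolynomial.mem_support_iff.mp hd) this

/-- The `n`-th Veronese subring of `k[X,Y]`: the span of all monomials whose total degree is
divisible by `n`. -/
def veronese (k : Type) [Field k] (n : ℕ) : Subalgebra k (MvPolynomial (Fin 2) k) where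
  carrier := {p | ∀ d ∈ p.support, n ∣ d.sum fun _ e => e}
  zero_mem' := by intro d hd; simp at hd
  one_mem' := by
    intro d hd
    rw [show (1 : MvPolynomial (Fin 2) k) = MvPolynomial.C 1 by simp] at hd
    rw [c_support k 1 hd]
    simp
  add_mem' := by
    intro p q hp hq d hd
    rcases Finset.mem_union.mp (MvPolynomial.support_add (p := p) (q := q) hd) with h | h
    · exact hp d h
    · exact hq d h
  mul_mem' := by
    intro p q hp hq d hd
    have hsub := MvPolynomial.support_mul (p := p) (q := q) hd
    rcases Finset.mem_add.mp hsub with ⟨a, ha, b, hb, rfl⟩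
    have : (a + b).sum (fun _ e => e) = a.sum (fun _ e => e) + b.sum (fun _ e => e) :=
      Finsupp.sum_add_index' (fun _ => rfl) (fun _ _ _ => rfl)
    rw [this]
    exact dvd_add (hp a ha) (hq b hb)
  algebraMap_mem' := by
    intro r d hd
    have : d = 0 := c_support k r (by simpa using hd)
    rw [this]
    simp

end MonoidHilbert

namespace MonoidHilbert

lemma Rm_mem_iff (m : ℕ) (v : Fin 2 → ℤ) :
    v ∈ Rm m ↔ ∃ α β γ δ : ℕ,
      v 0 = ((β*(m+1) + γ*(m+2) + δ*(2*m+3) : ℕ) : ℤ) ∧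
      v 1 = ((α*(2*m+3) + β*(m+2) + γ*(m+1) : ℕ) : ℤ) := by
  constructor
  · intro hv
    induction hv using AddSubmonoid.closure_induction with
    | mem x hx =>
      simp only [Set.mem_insert_iff, Set.mem_singleton_iff] at hx
      rcases hx with rfl | rfl | rfl | rfl
      · exact ⟨1, 0, 0, 0, by push_cast; simp, by push_cast; simp⟩
      · exact ⟨0, 1, 0, 0, by push_cast; simp, by push_cast; simp⟩
      · exact ⟨0, 0, 1, 0, by push_cast; simp, by push_cast; simp⟩
      · exact ⟨0, 0, 0, 1, by push_cast; simp, by push_cast; simp⟩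
    | zero => exact ⟨0, 0, 0, 0, by simp, by simp⟩
    | add x y hx hy ihx ihy =>
      obtain ⟨a1, b1, c1, d1, h1, h2⟩ := ihx
      obtain ⟨a2, b2, c2, d2, h3, h4⟩ := ihy
      exact ⟨a1+a2, b1+b2, c1+c2, d1+d2, by push_cast at *; simp [h1, h3]; ring,
        by push_cast at *; simp [h2, h4]; ring⟩
  · rintro ⟨α, β, γ, δ, h0, h1⟩
    have hv : v = α • ![(0 : ℤ), 2*m+3] + β • ![(m : ℤ)+1, m+2] + γ • ![(m : ℤ)+2, m+1]
        + δ • ![(2 : ℤ)*m+3, 0] := by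
      funext i
      fin_cases i
      · simp [h0]
      · simp [h1]
    rw [hv]
    have m1 : ![(0 : ℤ), 2*m+3] ∈ Rm m := AddSubmonoid.subset_closure (by simp)
    have m2 : ![(m : ℤ)+1, m+2] ∈ Rm m := AddSubmonoid.subset_closure (by simp)
    have m3 : ![(m : ℤ)+2, m+1] ∈ Rm m := AddSubmonoid.subset_closure (by simp)
    have m4 : ![(2 : ℤ)*m+3, 0] ∈ Rm m := AddSubmonoid.subset_closure (by simp)
    exact AddSubmonoid.add_mem _ (AddSubmonoid.add_mem _ (AddSubmonoid.add_mem _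
      (AddSubmonoid.nsmul_mem _ m1 α) (AddSubmonoid.nsmul_mem _ m2 β))
      (AddSubmonoid.nsmul_mem _ m3 γ)) (AddSubmonoid.nsmul_mem _ m4 δ)

/-- Partial union of the intervals `J_w = [w(m+1) + (w-n)⁺, w(m+1) + min w n]` for `w ≤ W`. -/
def Gn (m n W : ℕ) : Finset ℕ :=
  (Finset.range (W+1)).biUnion fun w => Finset.Icc (w*(m+1) + (w - n)) (w*(m+1) + min w n)

lemma mem_Gn_iff (m n x : ℕ) :
    x ∈ Gn m n (2*n) ↔ ∃ α β γ δ : ℕ, α + β + γ + δ = n ∧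
      x = β*(m+1) + γ*(m+2) + δ*(2*m+3) := by
  constructor
  · intro hx
    rw [Gn, Finset.mem_biUnion] at hx
    obtain ⟨w, hw, hx⟩ := hx
    rw [Finset.mem_range] at hw
    rw [Finset.mem_Icc] at hx
    set P := w*(m+1) with hP
    obtain ⟨hx1, hx2⟩ := hx
    refine ⟨n - (w - (w - n)), w - (x - P) - (w - n), (x - P) - (w - n), w - n, by omega, ?_⟩
    have hkey : ∀ β γ δ : ℕ, β*(m+1) + γ*(m+2) + δ*(2*m+3) = (β+γ+2*δ)*(m+1) + (γ+δ) := by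
      intro β γ δ; ring
    rw [hkey]
    have h1 : (w - (x - P) - (w - n)) + ((x - P) - (w - n)) + 2*(w - n) = w := by omega
    rw [h1, ← hP]
    omega
  · rintro ⟨α, β, γ, δ, hsum, rfl⟩
    rw [Gn, Finset.mem_biUnion]
    refine ⟨β + γ + 2*δ, by rw [Finset.mem_range]; omega, ?_⟩
    rw [Finset.mem_Icc]
    have hkey : β*(m+1) + γ*(m+2) + δ*(2*m+3) = (β+γ+2*δ)*(m+1) + (γ+δ) := by ring
    rw [hkey]
    constructor
    · have : (β+γ+2*δ) - n ≤ γ + δ := by omega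
      omega
    · have : γ + δ ≤ min (β+γ+2*δ) n := by omega
      omega

lemma Gn_le (m n W : ℕ) {x : ℕ} (hx : x ∈ Gn m n W) : x ≤ W*(m+1) + min W n := by
  rw [Gn, Finset.mem_biUnion] at hx
  obtain ⟨w, hw, hx⟩ := hx
  rw [Finset.mem_range] at hw
  rw [Finset.mem_Icc] at hx
  have h1 : w*(m+1) ≤ W*(m+1) := Nat.mul_le_mul_right _ (by omega)
  have h2 : min w n ≤ min W n := by omega
  omega

lemma Gn_succ_card (m n W : ℕ) :
    (Gn m n (W+1)).card = (Gn m n W).card +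
      ((W+1)*(m+1) + min (W+1) n + 1 - max (W*(m+1) + min W n + 1) ((W+1)*(m+1) + (W+1 - n))) := by
  have hun : Gn m n (W+1) = Gn m n W ∪
      Finset.Icc ((W+1)*(m+1) + (W+1 - n)) ((W+1)*(m+1) + min (W+1) n) := by
    rw [Gn, Finset.range_add_one, Finset.biUnion_insert, Finset.union_comm]
    rfl
  have hsd : Finset.Icc ((W+1)*(m+1) + (W+1 - n)) ((W+1)*(m+1) + min (W+1) n) \ Gn m n W
      = Finset.Icc (max (W*(m+1) + min W n + 1) ((W+1)*(m+1) + (W+1 - n)))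
          ((W+1)*(m+1) + min (W+1) n) := by
    ext x
    simp only [Finset.mem_sdiff, Finset.mem_Icc, max_le_iff]
    constructor
    · rintro ⟨⟨h1, h2⟩, h3⟩
      refine ⟨⟨?_, h1⟩, h2⟩
      by_contra hcon
      push_neg at hcon
      apply h3
      rw [Gn, Finset.mem_biUnion]
      refine ⟨W, by simp, ?_⟩
      rw [Finset.mem_Icc]
      have hmul : W*(m+1) + (m+1) = (W+1)*(m+1) := by ring
      omega
    · rintro ⟨⟨h1, h2⟩, h3⟩
      refine ⟨⟨h2, h3⟩, fun hmem => ?_⟩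
      have := Gn_le m n W hmem
      omega
  rw [hun, ← Finset.union_sdiff_self_eq_union, Finset.card_union_of_disjoint Finset.disjoint_sdiff,
    hsd, Nat.card_Icc]

lemma card_Gn (m n : ℕ) : ∀ W, W ≤ 2*n →
    2 * (Gn m n W).card + m*(m+1)
        + (max (m + W - 2*n) (m - n)) * ((max (m + W - 2*n) (m - n)) + 1)
      = 2*(W*(m+1) + min W n + 1) + (m - min W n)*((m - min W n) + 1)
        + (m - n)*((m - n)+1) := by
  intro W
  induction W with
  | zero =>
    intro _
    have h0 : Gn m n 0 = Finset.Icc 0 0 := by rw [Gn]; simp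
    have h1 : max (m + 0 - 2*n) (m - n) = m - n := by omega
    have h2 : min 0 n = 0 := by omega
    rw [h0, h1, h2]
    simp
  | succ W ih =>
    intro hW
    have ih' := ih (by omega)
    rw [Gn_succ_card]
    rw [show (W+1)*(m+1) = W*(m+1) + (m+1) from by ring]
    set P := W*(m+1) with hP
    rcases le_or_gt (W+1) n with h1 | h1
    · rcases le_or_gt (W+1) m with h2 | h2
      · -- W+1 ≤ n, W ≤ m : intervals still disjoint
        have eprod : (m - min W n)*((m - min W n)+1)
            = (m - min (W+1) n)*((m - min (W+1) n)+1) + 2*((m - min (W+1) n) + 1) := by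
          rw [show min W n = W from by omega, show min (W+1) n = W+1 from by omega,
            show m - W = (m - (W+1)) + 1 from by omega]
          ring
        have q : (max (m + (W+1) - 2*n) (m - n)) * ((max (m + (W+1) - 2*n) (m - n)) + 1)
            = (max (m + W - 2*n) (m - n)) * ((max (m + W - 2*n) (m - n)) + 1) := by
          rw [show max (m + (W+1) - 2*n) (m - n) = m - n from by omega,
            show max (m + W - 2*n) (m - n) = m - n from by omega]
        omega
      · -- W+1 ≤ n, W > m : merged
        have p1 : (m - min W n)*((m - min W n)+1) = 0 := by
          rw [show m - min W n = 0 from by omega]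
        have p2 : (m - min (W+1) n)*((m - min (W+1) n)+1) = 0 := by
          rw [show m - min (W+1) n = 0 from by omega]
        have q : (max (m + (W+1) - 2*n) (m - n)) * ((max (m + (W+1) - 2*n) (m - n)) + 1)
            = (max (m + W - 2*n) (m - n)) * ((max (m + W - 2*n) (m - n)) + 1) := by
          rw [show max (m + (W+1) - 2*n) (m - n) = m - n from by omega,
            show max (m + W - 2*n) (m - n) = m - n from by omega]
        omega
    · rcases le_or_gt (m + W + 1) (2*n) with h2 | h2
      · -- merged regime
        have q : (max (m + (W+1) - 2*n) (m - n)) * ((max (m + (W+1) - 2*n) (m - n)) + 1)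
            = (max (m + W - 2*n) (m - n)) * ((max (m + W - 2*n) (m - n)) + 1) := by
          rw [show max (m + (W+1) - 2*n) (m - n) = m - n from by omega,
            show max (m + W - 2*n) (m - n) = m - n from by omega]
        have r : (m - min (W+1) n)*((m - min (W+1) n)+1)
            = (m - min W n)*((m - min W n)+1) := by
          rw [show min (W+1) n = n from by omega, show min W n = n from by omega]
        omega
      · -- separated on top
        have q : (max (m + (W+1) - 2*n) (m - n)) * ((max (m + (W+1) - 2*n) (m - n)) + 1)
            = (max (m + W - 2*n) (m - n)) * ((max (m + W - 2*n) (m - n)) + 1)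
              + 2*((m + W - 2*n) + 1) := by
          rw [show max (m + (W+1) - 2*n) (m - n) = (m + W - 2*n) + 1 from by omega,
            show max (m + W - 2*n) (m - n) = m + W - 2*n from by omega]
          ring
        have r : (m - min (W+1) n)*((m - min (W+1) n)+1)
            = (m - min W n)*((m - min W n)+1) := by
          rw [show min (W+1) n = n from by omega, show min W n = n from by omega]
        omega

lemma Rm_nonneg {m : ℕ} {v : Fin 2 → ℤ} (hv : v ∈ Rm m) : 0 ≤ v 0 ∧ 0 ≤ v 1 := by
  rw [Rm_mem_iff] at hv
  obtain ⟨α, β, γ, δ, h0, h1⟩ := hv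
  exact ⟨h0 ▸ Int.natCast_nonneg _, h1 ▸ Int.natCast_nonneg _⟩

lemma card_Rm_deg (m n : ℕ) :
    Nat.card {x : Fin 2 → ℤ // x ∈ (Rm m : Set (Fin 2 → ℤ)) ∧ x 0 + x 1 = (2*m+3 : ℤ)*n}
      = (Gn m n (2*n)).card := by
  rw [← Nat.card_eq_finsetCard]
  refine Nat.card_congr (Equiv.ofBijective (fun v => ⟨(v.1 0).toNat, ?_⟩) ⟨?_, ?_⟩)
  · obtain ⟨hv, hdeg⟩ := v.2
    have hv' : v.1 ∈ Rm m := hv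
    rw [Rm_mem_iff] at hv'
    obtain ⟨α, β, γ, δ, h0, h1⟩ := hv'
    rw [mem_Gn_iff]
    refine ⟨α, β, γ, δ, ?_, by rw [h0, Int.toNat_natCast]⟩
    have hc : ((2*m+3) * (α+β+γ+δ) : ℕ) = ((2*m+3)*n : ℕ) := by
      rw [h0, h1] at hdeg
      exact_mod_cast (by push_cast at hdeg ⊢; linarith : (((2*m+3) * (α+β+γ+δ) : ℕ) : ℤ)
        = (((2*m+3)*n : ℕ) : ℤ))
    exact Nat.eq_of_mul_eq_mul_left (by omega) hc
  · rintro ⟨v, hv, hdv⟩ ⟨w, hw, hdw⟩ hvw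
    have h0 : (v 0).toNat = (w 0).toNat := congrArg Subtype.val hvw
    have hv0 := (Rm_nonneg hv).1
    have hw0 := (Rm_nonneg hw).1
    have e0 : v 0 = w 0 := by omega
    have e1 : v 1 = w 1 := by omega
    refine Subtype.ext (funext fun i => ?_)
    fin_cases i
    · exact e0
    · exact e1
  · rintro ⟨x, hx⟩
    rw [mem_Gn_iff] at hx
    obtain ⟨α, β, γ, δ, hsum, hxeq⟩ := hx
    refine ⟨⟨![(x : ℤ), (2*m+3)*n - x], ⟨?_, by simp⟩⟩, ?_⟩
    · show ![(x : ℤ), (2*m+3)*n - x] ∈ Rm m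
      rw [Rm_mem_iff]
      refine ⟨α, β, γ, δ, by simp [hxeq], ?_⟩
      show ((2:ℤ)*m+3)*n - x = _
      rw [hxeq, ← hsum]
      push_cast
      ring
    · exact Subtype.ext (by simp)

lemma sat_mem_iff (m : ℕ) (v : Fin 2 → ℤ) :
    v ∈ saturation (Rm m) ↔ 0 ≤ v 0 ∧ 0 ≤ v 1 ∧ (2*(m:ℤ)+3) ∣ (v 0 + v 1) := by
  constructor
  · rintro ⟨hgrp, k, hk, hkv⟩
    have hdvd : (2*(m:ℤ)+3) ∣ (v 0 + v 1) := by
      clear hkv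
      induction hgrp using AddSubgroup.closure_induction with
      | mem x hx =>
        have hx' : x ∈ Rm m := hx
        rw [Rm_mem_iff] at hx'
        obtain ⟨α, β, γ, δ, h0, h1⟩ := hx'
        refine ⟨α + β + γ + δ, ?_⟩
        rw [h0, h1]; push_cast; ring
      | zero => simp
      | add x y hx hy ihx ihy =>
        have : (x + y) 0 + (x + y) 1 = (x 0 + x 1) + (y 0 + y 1) := by
          simp [Pi.add_apply]; ring
        rw [this]; exact dvd_add ihx ihy
      | neg x hx ihx =>
        have : (-x) 0 + (-x) 1 = -(x 0 + x 1) := by simp [Pi.neg_apply]; ring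
        rw [this]; exact dvd_neg.mpr ihx
    have hkpos : (0:ℤ) < k := by exact_mod_cast hk
    have h0 := (Rm_nonneg hkv).1
    have h1 := (Rm_nonneg hkv).2
    rw [Pi.smul_apply] at h0 h1
    simp only [nsmul_eq_mul] at h0 h1
    refine ⟨nonneg_of_mul_nonneg_right ?_ hkpos, nonneg_of_mul_nonneg_right ?_ hkpos, hdvd⟩
    · exact h0
    · exact h1
  · rintro ⟨h0, h1, d, hd⟩
    have hdpos : 0 ≤ d := by nlinarith
    constructor
    · have hsub : v = (v 0) • (![(m : ℤ)+2, m+1] - ![(m : ℤ)+1, m+2]) + d • ![(0:ℤ), 2*m+3] := by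
        funext i
        fin_cases i
        · simp
        · simp only [Pi.add_apply, Pi.smul_apply, Pi.sub_apply]
          show v 1 = v 0 • (((m:ℤ)+1) - ((m:ℤ)+2)) + d • (2*(m:ℤ)+3)
          simp only [smul_eq_mul]
          linarith
      rw [hsub]
      have m2 : ![(m : ℤ)+2, m+1] ∈ AddSubgroup.closure ((Rm m : Set (Fin 2 → ℤ))) :=
        AddSubgroup.subset_closure (by
          exact AddSubmonoid.subset_closure (by simp))
      have m1 : ![(m : ℤ)+1, m+2] ∈ AddSubgroup.closure ((Rm m : Set (Fin 2 → ℤ))) :=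
        AddSubgroup.subset_closure (by
          exact AddSubmonoid.subset_closure (by simp))
      have m0 : ![(0:ℤ), 2*m+3] ∈ AddSubgroup.closure ((Rm m : Set (Fin 2 → ℤ))) :=
        AddSubgroup.subset_closure (by
          exact AddSubmonoid.subset_closure (by simp))
      exact AddSubgroup.add_mem _ (AddSubgroup.zsmul_mem _ (AddSubgroup.sub_mem _ m2 m1) _)
        (AddSubgroup.zsmul_mem _ m0 _)
    · refine ⟨2*m+3, by omega, ?_⟩
      set a := (v 0).toNat with hA
      set b := (v 1).toNat with hB
      set dn := d.toNat with hD
      have hva : v 0 = (a:ℤ) := (Int.toNat_of_nonneg h0).symm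
      have hvb : v 1 = (b:ℤ) := (Int.toNat_of_nonneg h1).symm
      have hvd : d = (dn:ℤ) := (Int.toNat_of_nonneg hdpos).symm
      have hab : a + b = (2*m+3)*dn := by
        have : ((a + b : ℕ) : ℤ) = (((2*m+3)*dn : ℕ) : ℤ) := by
          push_cast
          rw [← hva, ← hvb, ← hvd]
          linarith
        exact_mod_cast this
      have hmem : (2*m+3)*a ∈ Gn m ((2*m+3)*dn) (2*((2*m+3)*dn)) := by
        rw [Gn, Finset.mem_biUnion]
        refine ⟨2*a, ?_, ?_⟩
        · rw [Finset.mem_range]; omega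
        · rw [Finset.mem_Icc]
          have hEq : (2*a)*(m+1) + a = (2*m+3)*a := by ring
          omega
      rw [mem_Gn_iff] at hmem
      obtain ⟨α, β, γ, δ, hsum, hx⟩ := hmem
      rw [Rm_mem_iff]
      refine ⟨α, β, γ, δ, ?_, ?_⟩
      · show (2*m+3) • (v 0) = _
        rw [hva]
        simp only [nsmul_eq_mul]
        exact_mod_cast hx
      · show (2*m+3) • (v 1) = _
        rw [hvb]
        have key : (2*m+3)*(α+β+γ+δ)
            = α*(2*m+3)+β*(m+2)+γ*(m+1) + (β*(m+1)+γ*(m+2)+δ*(2*m+3)) := by ring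
        have key2 : (2*m+3)*(a+b) = (2*m+3)*a + (2*m+3)*b := by ring
        have key4 : (2*m+3)*(α+β+γ+δ) = (2*m+3)*(a+b) := by rw [hsum, hab]
        have key3 : (2*m+3)*b = α*(2*m+3)+β*(m+2)+γ*(m+1) := by omega
        simp only [nsmul_eq_mul]
        exact_mod_cast key3

lemma card_sat_deg (m n : ℕ) :
    Nat.card {x : Fin 2 → ℤ // x ∈ (saturation (Rm m) : Set (Fin 2 → ℤ))
        ∧ x 0 + x 1 = (2*m+3 : ℤ)*n}
      = (2*m+3)*n + 1 := by
  have hNn : (((2*m+3)*n : ℕ) : ℤ) = (2*(m:ℤ)+3)*n := by push_cast; ring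
  rw [show (2*m+3)*n + 1 = (Finset.range ((2*m+3)*n + 1)).card from (Finset.card_range _).symm,
    ← Nat.card_eq_finsetCard]
  refine Nat.card_congr (Equiv.ofBijective (fun v => ⟨(v.1 0).toNat, ?_⟩) ⟨?_, ?_⟩)
  · obtain ⟨hv, hdeg⟩ := v.2
    have hv' : v.1 ∈ saturation (Rm m) := hv
    rw [sat_mem_iff] at hv'
    obtain ⟨h0, h1, -⟩ := hv'
    rw [Finset.mem_range]
    omega
  · rintro ⟨v, hv, hdv⟩ ⟨w, hw, hdw⟩ hvw
    have h0 : (v 0).toNat = (w 0).toNat := congrArg Subtype.val hvw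
    have hv' : v ∈ saturation (Rm m) := hv
    have hw' : w ∈ saturation (Rm m) := hw
    rw [sat_mem_iff] at hv' hw'
    have e0 : v 0 = w 0 := by omega
    have e1 : v 1 = w 1 := by omega
    refine Subtype.ext (funext fun i => ?_)
    fin_cases i
    · exact e0
    · exact e1
  · rintro ⟨x, hx⟩
    rw [Finset.mem_range] at hx
    refine ⟨⟨![(x : ℤ), (2*m+3)*n - x], ⟨?_, by simp⟩⟩, Subtype.ext (by simp)⟩
    show ![(x : ℤ), (2*m+3)*n - x] ∈ saturation (Rm m)
    rw [sat_mem_iff]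
    refine ⟨by simp, ?_, ?_⟩
    · show (0:ℤ) ≤ (2*m+3)*n - x
      omega
    · show (2*(m:ℤ)+3) ∣ ((x:ℤ) + ((2*m+3)*n - x))
      exact ⟨n, by ring⟩

open Polynomial in
/-- **Theorem.** The h-polynomial of `k[R_m]` is `1 + 2t + 2t² + ⋯ + 2t^{m+1}`; consequently
`deg h_{R_m}(t) − deg h_{R̄_m}(t) = m`, so the degree of the h-polynomial of a monoid algebra
can exceed that of its normalization by an arbitrary amount. -/
theorem rm_hPoly (m : ℕ) (h hbar : Polynomial ℤ)
    (hh : (h : PowerSeries ℤ) =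
      rmHilbSeries m (Rm m : Set (Fin 2 → ℤ)) * (1 - PowerSeries.X) ^ 2)
    (hhbar : (hbar : PowerSeries ℤ) =
      rmHilbSeries m (saturation (Rm m) : Set (Fin 2 → ℤ)) * (1 - PowerSeries.X) ^ 2) :
    h = 1 + C 2 * ∑ i ∈ Finset.Icc 1 (m + 1), X ^ i ∧
    (h.natDegree : ℤ) - (hbar.natDegree : ℤ) = m := by
  set c : ℕ → ℕ := fun j => (Gn m j (2*j)).card with hcdef
  -- coefficients of the two Hilbert series
  have hc : ∀ k, PowerSeries.coeff k (rmHilbSeries m (Rm m : Set (Fin 2 → ℤ))) = (c k : ℤ) := by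
    intro k
    rw [rmHilbSeries, PowerSeries.coeff_mk, hcdef]
    exact_mod_cast congrArg (Nat.cast : ℕ → ℤ) (card_Rm_deg m k)
  have hcbar : ∀ k, PowerSeries.coeff k
      (rmHilbSeries m (saturation (Rm m) : Set (Fin 2 → ℤ))) = (((2*m+3)*k + 1 : ℕ) : ℤ) := by
    intro k
    rw [rmHilbSeries, PowerSeries.coeff_mk]
    exact_mod_cast congrArg (Nat.cast : ℕ → ℤ) (card_sat_deg m k)
  -- coefficient extraction
  have hexp : ∀ f : PowerSeries ℤ, f * (1 - PowerSeries.X)^2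
      = f - f * PowerSeries.X^1 - f * PowerSeries.X^1 + f * PowerSeries.X^2 := by
    intro f; ring
  have hco : ∀ (p : Polynomial ℤ) (f : PowerSeries ℤ),
      (p : PowerSeries ℤ) = f * (1 - PowerSeries.X)^2 →
      (p.coeff 0 = PowerSeries.coeff 0 f) ∧
      (p.coeff 1 = PowerSeries.coeff 1 f - 2 * PowerSeries.coeff 0 f) ∧
      ∀ j, p.coeff (j+2) = PowerSeries.coeff (j+2) f - 2 * PowerSeries.coeff (j+1) f
        + PowerSeries.coeff j f := by
    intro p f hp
    rw [hexp] at hp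
    refine ⟨?_, ?_, fun j => ?_⟩
    · have := congrArg (PowerSeries.coeff 0) hp
      rw [Polynomial.coeff_coe] at this
      simp only [map_sub, map_add, PowerSeries.coeff_mul_X_pow',
        if_neg (show ¬(1:ℕ) ≤ 0 by omega), if_neg (show ¬(2:ℕ) ≤ 0 by omega)] at this
      rw [this]; ring
    · have := congrArg (PowerSeries.coeff 1) hp
      rw [Polynomial.coeff_coe] at this
      simp only [map_sub, map_add, PowerSeries.coeff_mul_X_pow',
        if_pos (show (1:ℕ) ≤ 1 by omega), if_neg (show ¬(2:ℕ) ≤ 1 by omega),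
        show 1-1 = 0 from rfl] at this
      rw [this]; ring
    · have := congrArg (PowerSeries.coeff (j+2)) hp
      rw [Polynomial.coeff_coe] at this
      simp only [map_sub, map_add, PowerSeries.coeff_mul_X_pow',
        if_pos (show 1 ≤ j+2 by omega), if_pos (show 2 ≤ j+2 by omega),
        show j+2-1 = j+1 from rfl, Nat.add_sub_cancel] at this
      rw [this]; ring
  obtain ⟨hco0, hco1, hco2⟩ := hco h _ hh
  obtain ⟨hbo0, hbo1, hbo2⟩ := hco hbar _ hhbar
  simp only [hc] at hco0 hco1 hco2
  simp only [hcbar] at hbo0 hbo1 hbo2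
  -- the key cardinality formula, in ℤ
  have hN : ∀ j : ℕ, 2 * c j + 2*(m*(m+1))
      = 2*((2*j)*(m+1) + j + 1) + 2*((m - j)*((m - j) + 1)) := by
    intro j
    simp only [hcdef]
    have H := card_Gn m j (2*j) (le_refl _)
    rw [show min (2*j) j = j from by omega,
      show max (m + 2*j - 2*j) (m - j) = m from by omega] at H
    omega
  have hint : ∀ j : ℕ, 2 * ((c j : ℤ)) + 2*((m:ℤ)*((m:ℤ)+1))
      = 2*((2*(j:ℤ))*((m:ℤ)+1) + (j:ℤ) + 1)
        + 2*((((m - j : ℕ)):ℤ)*((((m - j : ℕ)):ℤ) + 1)) := by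
    intro j
    have := congrArg (Nat.cast : ℕ → ℤ) (hN j)
    push_cast at this
    linarith
  -- coefficients of the target polynomial
  have hT : ∀ j, (1 + C (2:ℤ) * ∑ i ∈ Finset.Icc 1 (m + 1), X ^ i).coeff j
      = (if j = 0 then 1 else 0) + 2 * (if j ∈ Finset.Icc 1 (m+1) then 1 else 0) := by
    intro j
    rw [Polynomial.coeff_add, Polynomial.coeff_one, Polynomial.coeff_C_mul,
      Polynomial.finset_sum_coeff]
    simp only [Polynomial.coeff_X_pow]
    rw [Finset.sum_ite_eq (Finset.Icc 1 (m+1)) j (fun _ => (1:ℤ))]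
  -- h equals the target polynomial
  have hmain : h = 1 + C (2:ℤ) * ∑ i ∈ Finset.Icc 1 (m + 1), X ^ i := by
    apply Polynomial.ext
    intro j
    rw [hT]
    obtain rfl | rfl | ⟨j, rfl⟩ : j = 0 ∨ j = 1 ∨ ∃ k, j = k + 2 := by
      rcases j with _ | _ | j
      · exact Or.inl rfl
      · exact Or.inr (Or.inl rfl)
      · exact Or.inr (Or.inr ⟨j, rfl⟩)
    · rw [hco0]
      have h0 := hint 0
      rw [show ((m - 0 : ℕ) : ℤ) = (m:ℤ) from by omega] at h0
      have : (0:ℕ) ∉ Finset.Icc 1 (m+1) := by simp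
      rw [if_pos rfl, if_neg this]
      push_cast at h0
      linarith
    · rw [hco1]
      have h0 := hint 0
      have h1 := hint 1
      rw [show ((m - 0 : ℕ) : ℤ) = (m:ℤ) from by omega] at h0
      have : (1:ℕ) ∈ Finset.Icc 1 (m+1) := by simp
      rw [if_neg (by omega), if_pos this]
      rcases Nat.eq_zero_or_pos m with hm | hm
      · subst hm
        norm_num at h0 h1 ⊢
        linarith
      · rw [show ((m - 1 : ℕ) : ℤ) = (m:ℤ) - 1 from by omega] at h1
        push_cast at h0 h1
        have key : 2*((c 1 : ℤ)) - 4*((c 0 : ℤ)) = 4 := by linear_combination h1 - 2*h0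
        linarith
    · rw [hco2]
      have h0 := hint j
      have h1 := hint (j+1)
      have h2 := hint (j+2)
      rw [if_neg (by omega)]
      obtain hreg | hreg | hreg | hreg :
          j + 2 ≤ m ∨ j + 2 = m + 1 ∨ j + 2 = m + 2 ∨ m + 3 ≤ j + 2 := by omega
      · rw [show ((m - j : ℕ) : ℤ) = (m:ℤ) - j from by omega] at h0
        rw [show ((m - (j+1) : ℕ) : ℤ) = (m:ℤ) - j - 1 from by omega] at h1
        rw [show ((m - (j+2) : ℕ) : ℤ) = (m:ℤ) - j - 2 from by omega] at h2
        rw [if_pos (by simp [Finset.mem_Icc]; omega)]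
        push_cast at h0 h1 h2
        have key : 2*((c (j+2) : ℤ)) - 4*((c (j+1) : ℤ)) + 2*((c j : ℤ)) = 4 := by
          linear_combination h2 - 2*h1 + h0
        linarith
      · rw [show ((m - j : ℕ) : ℤ) = 1 from by omega] at h0
        rw [show ((m - (j+1) : ℕ) : ℤ) = 0 from by omega] at h1
        rw [show ((m - (j+2) : ℕ) : ℤ) = 0 from by omega] at h2
        rw [if_pos (by simp [Finset.mem_Icc]; omega)]
        push_cast at h0 h1 h2
        have key : 2*((c (j+2) : ℤ)) - 4*((c (j+1) : ℤ)) + 2*((c j : ℤ)) = 4 := by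
          linear_combination h2 - 2*h1 + h0
        linarith
      · rw [show ((m - j : ℕ) : ℤ) = 0 from by omega] at h0
        rw [show ((m - (j+1) : ℕ) : ℤ) = 0 from by omega] at h1
        rw [show ((m - (j+2) : ℕ) : ℤ) = 0 from by omega] at h2
        rw [if_neg (by simp [Finset.mem_Icc]; omega)]
        push_cast at h0 h1 h2
        have key : 2*((c (j+2) : ℤ)) - 4*((c (j+1) : ℤ)) + 2*((c j : ℤ)) = 0 := by
          linear_combination h2 - 2*h1 + h0
        linarith
      · rw [show ((m - j : ℕ) : ℤ) = 0 from by omega] at h0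
        rw [show ((m - (j+1) : ℕ) : ℤ) = 0 from by omega] at h1
        rw [show ((m - (j+2) : ℕ) : ℤ) = 0 from by omega] at h2
        rw [if_neg (by simp [Finset.mem_Icc]; omega)]
        push_cast at h0 h1 h2
        have key : 2*((c (j+2) : ℤ)) - 4*((c (j+1) : ℤ)) + 2*((c j : ℤ)) = 0 := by
          linear_combination h2 - 2*h1 + h0
        linarith
  refine ⟨hmain, ?_⟩
  -- degree computations
  have hdeg_h : h.natDegree = m + 1 := by
    apply le_antisymm
    · rw [Polynomial.natDegree_le_iff_coeff_eq_zero]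
      intro k hk
      rw [hmain, hT]
      rw [if_neg (by omega), if_neg (by simp [Finset.mem_Icc]; omega)]
      ring
    · apply Polynomial.le_natDegree_of_ne_zero
      rw [hmain, hT]
      rw [if_neg (by omega), if_pos (by simp [Finset.mem_Icc])]
      norm_num
  have hbar2 : ∀ j, hbar.coeff (j+2) = 0 := by
    intro j
    rw [hbo2]
    push_cast
    ring
  have hdeg_hbar : hbar.natDegree = 1 := by
    apply le_antisymm
    · rw [Polynomial.natDegree_le_iff_coeff_eq_zero]
      intro k hk
      obtain ⟨j, rfl⟩ : ∃ j, k = j + 2 := ⟨k - 2, by omega⟩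
      exact hbar2 j
    · apply Polynomial.le_natDegree_of_ne_zero
      rw [hbo1]
      intro hcon
      push_cast at hcon
      omega
  rw [hdeg_h, hdeg_hbar]
  push_cast
  ring

end MonoidHilbert
end
end
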